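/- arXiv:1208.2337 — 9 statements merged into one kernel-verified Lean document; each statement's English description precedes it below -/
import Mathlib

section
/- For every n ≥ 1, the Yablonskii–Vorob'ev polynomial Q_n is a monic polynomial of degree n(n+1)/2 with integer coefficients. -/
open Polynomial

/-- For every `n ≥ 1`, the Yablonskii–Vorob'ev polynomial `Q n` is a monic polynomial
of degree `n(n+1)/2` with integer coefficients. -/
theorem yablonskii_vorobev_monic_degree_int_coeffs
    (Q : ℕ → Polynomial ℝ)
    (hQ0 : Q 0 = 1) (hQ1 : Q 1 = X)
    (hrec : ∀ n, Q (n + 2) * Q n =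
      X * (Q (n + 1)) ^ 2 -
        4 * (Q (n + 1) * derivative (derivative (Q (n + 1))) - (derivative (Q (n + 1))) ^ 2)) :
    ∀ n, 1 ≤ n →
      (Q n).Monic ∧ (Q n).natDegree = n * (n + 1) / 2 ∧
        ∀ k, ∃ m : ℤ, (Q n).coeff k = (m : ℝ) := by
  set f : ℤ →+* ℝ := Int.castRingHom ℝ with hf
  have hinj : Function.Injective f := fun a b h => by
    simpa [hf] using h
  have main : ∀ n, ((Q n).Monic ∧ (Q n).natDegree = n * (n + 1) / 2 ∧
      ∃ p : Polynomial ℤ, Q n = p.map f) ∧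
      ((Q (n+1)).Monic ∧ (Q (n+1)).natDegree = (n+1) * ((n+1) + 1) / 2 ∧
      ∃ p : Polynomial ℤ, Q (n+1) = p.map f) := by
    intro n
    induction n with
    | zero =>
      refine ⟨⟨?_, ?_, ⟨1, ?_⟩⟩, ?_, ?_, ⟨X, ?_⟩⟩ <;>
        simp [hQ0, hQ1, monic_X, monic_one]
    | succ n ih =>
      obtain ⟨⟨hm0, hd0, p0, hp0⟩, hm1, hd1, p1, hp1⟩ := ih
      refine ⟨⟨hm1, hd1, p1, hp1⟩, ?_⟩
      -- triangular number arithmetic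
      obtain ⟨a, ha⟩ : ∃ a, n * (n+1) = 2 * a := by
        obtain ⟨a, ha⟩ := Nat.even_mul_succ_self n
        exact ⟨a, by omega⟩
      have hb : (n+1) * ((n+1)+1) = 2 * (a + n + 1) := by
        have : (n+1) * ((n+1)+1) = n * (n+1) + 2 * (n+1) := by ring
        omega
      have hc : (n+2) * ((n+2)+1) = 2 * (a + 2*n + 3) := by
        have : (n+2) * ((n+2)+1) = n * (n+1) + 4*n + 6 := by ring
        omega
      have hd0' : (Q n).natDegree = a := by rw [hd0, ha]; omega
      have hd1' : (Q (n+1)).natDegree = a + n + 1 := by rw [hd1, hb]; omega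
      -- RHS analysis
      set A : Polynomial ℝ := X * (Q (n+1)) ^ 2 with hA
      set B : Polynomial ℝ := 4 * (Q (n + 1) * derivative (derivative (Q (n + 1))) -
        (derivative (Q (n + 1))) ^ 2) with hB
      have hAm : A.Monic := monic_X.mul (hm1.pow 2)
      have hAd : A.natDegree = 2 * (a + n + 1) + 1 := by
        rw [hA, monic_X.natDegree_mul (hm1.pow 2), natDegree_X, hm1.natDegree_pow, hd1']
        ring
      have hBd : B.natDegree ≤ 2 * (a + n + 1) := by
        have h1 : (derivative (Q (n+1))).natDegree ≤ a + n := by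
          have := natDegree_derivative_le (Q (n+1)); omega
        have h2 : (derivative (derivative (Q (n+1)))).natDegree ≤ a + n := by
          have := natDegree_derivative_le (derivative (Q (n+1)))
          have := natDegree_derivative_le (Q (n+1))
          omega
        refine (natDegree_mul_le).trans ?_
        have h3 : (Q (n + 1) * derivative (derivative (Q (n + 1)))).natDegree
            ≤ 2 * (a + n + 1) := by
          refine natDegree_mul_le.trans ?_; omega
        have h4 : ((derivative (Q (n + 1))) ^ 2).natDegree ≤ 2 * (a + n + 1) := by
          refine (natDegree_pow_le).trans ?_; omega
        have h5 : ((Q (n + 1) * derivative (derivative (Q (n + 1))) -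
            (derivative (Q (n + 1))) ^ 2)).natDegree ≤ 2 * (a + n + 1) :=
          (natDegree_sub_le _ _).trans (by omega)
        have h6 : (4 : Polynomial ℝ).natDegree = 0 := natDegree_ofNat 4
        omega
      have hBltA : B.degree < A.degree := degree_lt_degree (by omega)
      have hRm : (A - B).Monic := by
        have := hAm.add_of_left (q := -B) (by rwa [degree_neg])
        simpa [sub_eq_add_neg] using this
      have hRd : (A - B).natDegree = 2 * (a + n + 1) + 1 := by
        rw [sub_eq_add_neg, natDegree_add_eq_left_of_natDegree_lt (by rw [natDegree_neg]; omega)]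
        exact hAd
      have hrec' : Q (n + 2) * Q n = A - B := hrec n
      have hQn0 : Q n ≠ 0 := hm0.ne_zero
      -- monic
      have hm2 : (Q (n+2)).Monic := by
        have : (Q n * Q (n+2)).Monic := by rwa [mul_comm, hrec']
        exact hm0.of_mul_monic_left this
      -- degree
      have hd2 : (Q (n+2)).natDegree = (n+2) * ((n+2)+1) / 2 := by
        have := natDegree_mul (hm2.ne_zero) hQn0
        rw [hrec', hRd, hd0'] at this
        rw [hc]; omega
      refine ⟨hm2, hd2, ?_⟩
      -- integer coefficients
      have hp0m : p0.Monic := monic_of_injective hinj (hp0 ▸ hm0)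
      set rZ : Polynomial ℤ := X * p1 ^ 2 -
        4 * (p1 * derivative (derivative p1) - (derivative p1) ^ 2) with hrZ
      have hmapr : rZ.map f = A - B := by
        rw [hrZ, hA, hB, hp1]
        simp [Polynomial.map_mul, Polynomial.map_sub, Polynomial.map_pow,
          derivative_map, Polynomial.map_ofNat]
      have hdvd : (p0.map f) ∣ rZ.map f := by
        refine ⟨Q (n+2), ?_⟩
        rw [hmapr, ← hrec', ← hp0]; ring
      have hmod0 : rZ %ₘ p0 = 0 := by
        have hmod : (rZ %ₘ p0).map f = 0 := by
          rw [map_modByMonic f hp0m, modByMonic_eq_zero_iff_dvd (hp0m.map f)]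
          exact hdvd
        exact (Polynomial.map_eq_zero_iff hinj).mp hmod
      refine ⟨rZ /ₘ p0, ?_⟩
      have key : (p0.map f) * ((rZ /ₘ p0).map f) = rZ.map f := by
        conv_rhs => rw [← modByMonic_add_div rZ p0]
        rw [hmod0]
        simp [Polynomial.map_mul]
      rw [← hp0, hmapr, ← hrec'] at key
      have : Q n * ((rZ /ₘ p0).map f) = Q n * Q (n+2) := by
        rw [key]; ring
      exact (mul_left_cancel₀ hQn0 this).symm
  intro n hn
  obtain ⟨h1, h2, p, hp⟩ := (main n).1
  exact ⟨h1, h2, fun k => ⟨p.coeff k, by rw [hp, coeff_map]; rfl⟩⟩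
end

section
/- Let n ≥ 1 and suppose the identities (i) Q_{n+1}'·Q_{n-1} − Q_{n+1}·Q_{n-1}' = (2n+1)·Q_n^2, (ii) Q_{n+1}''·Q_{n-1} − Q_{n+1}·Q_{n-1}'' = 2(2n+1)·Q_n·Q_n', and (iii) Q_{n+1}'''·Q_{n-1} − Q_{n+1}·Q_{n-1}''' = 2(2n+1)·(Q_n')^2 + (2n+1)·Q_n·Q_n'' hold, and that Q_n has only simple roots. If x ∈ ℝ is a point where Q_{n+1} crosses Q_{n-1} positively, then Q_{n+1}(x) = Q_{n-1}(x) > 0. -/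
open Polynomial

lemma factor_root (p : Polynomial ℝ) (x : ℝ) (h : p.eval x = 0) :
    ∃ q, p = (X - C x) * q ∧ q.eval x = (derivative p).eval x := by
  obtain ⟨q, hq⟩ := dvd_iff_isRoot.mpr h
  refine ⟨q, hq, ?_⟩
  rw [hq, derivative_mul]
  simp

lemma factor3 (d : Polynomial ℝ) (x : ℝ) (h0 : d.eval x = 0)
    (h1 : (derivative d).eval x = 0)
    (h2 : (derivative (derivative d)).eval x = 0) :
    ∃ q, d = (X - C x) ^ 3 * q ∧
      6 * q.eval x = (derivative (derivative (derivative d))).eval x := by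
  obtain ⟨q1, hd1, he1⟩ := factor_root d x h0
  obtain ⟨q2, hd2, he2⟩ := factor_root q1 x (by rw [he1, h1])
  have hd1' : derivative d = q1 + (X - C x) * derivative q1 := by
    rw [hd1, derivative_mul]; simp
  have hq1' : (derivative q1).eval x = 0 := by
    have : (derivative (derivative d)).eval x = 2 * (derivative q1).eval x := by
      rw [hd1', derivative_add, derivative_mul]
      simp; ring
    rw [h2] at this; linarith
  obtain ⟨q3, hd3, he3⟩ := factor_root q2 x (by rw [he2, hq1'])
  refine ⟨q3, by rw [hd1, hd2, hd3]; ring, ?_⟩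
  have hq1'' : derivative q1 = q2 + (X - C x) * derivative q2 := by
    rw [hd2, derivative_mul]; simp
  have hq2e : (derivative (derivative q1)).eval x = 2 * (derivative q2).eval x := by
    rw [hq1'', derivative_add, derivative_mul]; simp; ring
  have hdd : (derivative (derivative (derivative d))).eval x
      = 3 * (derivative (derivative q1)).eval x := by
    rw [hd1']
    simp [derivative_add, derivative_mul]
    ring
  rw [hdd, hq2e, he3]
  ring

lemma left_pos (dd q : Polynomial ℝ) (x : ℝ) (k : ℕ) (hk : Odd k)
    (hd : dd = (X - C x) ^ k * q) (hq : q.eval x < 0) (δ : ℝ) (hδ : 0 < δ) :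
    ∃ y, x - δ < y ∧ y < x ∧ 0 < dd.eval y := by
  have hev : ∀ᶠ y in nhds x, q.eval y < 0 :=
    (q.continuous_aeval.continuousAt).eventually_lt_const hq
  rw [Metric.eventually_nhds_iff] at hev
  obtain ⟨ε, hε, hball⟩ := hev
  set y := x - min ε δ / 2 with hy
  have hmin : 0 < min ε δ := lt_min hε hδ
  have hle1 : min ε δ ≤ ε := min_le_left _ _
  have hle2 : min ε δ ≤ δ := min_le_right _ _
  have hyx : y < x := by rw [hy]; linarith
  have h1 : x - δ < y := by rw [hy]; linarith
  have hdist : dist y x < ε := by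
    rw [Real.dist_eq, hy, abs_of_nonpos (by linarith)]
    linarith
  have hqy : q.eval y < 0 := by simpa using hball hdist
  refine ⟨y, h1, hyx, ?_⟩
  rw [hd]
  simp only [eval_mul, eval_pow, eval_sub, eval_X, eval_C]
  exact mul_pos_of_neg_of_neg (hk.pow_neg (by linarith)) hqy

set_option maxHeartbeats 1000000 in
/-- If `Qnp1` (i.e. `Q_{n+1}`) crosses `Qnm1` (i.e. `Q_{n-1}`) positively at `x`,
then their common value at `x` is positive. -/
theorem positive_crossing (n : ℕ) (hn : 1 ≤ n)
    (Qnm1 Qn Qnp1 : Polynomial ℝ)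
    (h1 : derivative Qnp1 * Qnm1 - Qnp1 * derivative Qnm1 = C ((2 * n + 1 : ℕ) : ℝ) * Qn ^ 2)
    (h2 : derivative (derivative Qnp1) * Qnm1 - Qnp1 * derivative (derivative Qnm1) =
      2 * C ((2 * n + 1 : ℕ) : ℝ) * Qn * derivative Qn)
    (h3 : derivative (derivative (derivative Qnp1)) * Qnm1 -
        Qnp1 * derivative (derivative (derivative Qnm1)) =
      2 * C ((2 * n + 1 : ℕ) : ℝ) * (derivative Qn) ^ 2 +
        C ((2 * n + 1 : ℕ) : ℝ) * Qn * derivative (derivative Qn))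
    (hsimple : ∀ y : ℝ, Qn.eval y = 0 → (derivative Qn).eval y ≠ 0)
    (x : ℝ)
    (hcross : Qnp1.eval x = Qnm1.eval x ∧ ∃ δ > 0,
      (∀ y, x - δ < y → y < x → Qnp1.eval y < Qnm1.eval y) ∧
      (∀ y, x < y → y < x + δ → Qnp1.eval y > Qnm1.eval y)) :
    Qnp1.eval x = Qnm1.eval x ∧ Qnm1.eval x > 0 := by
  obtain ⟨hc, δ, hδ, hleft, _⟩ := hcross
  refine ⟨hc, ?_⟩
  set M : ℝ := ((2 * n + 1 : ℕ) : ℝ) with hM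
  have hMpos : 0 < M := by positivity
  set c : ℝ := Qnm1.eval x with hcdef
  set s : ℝ := Qn.eval x with hs
  set t : ℝ := (derivative Qn).eval x with ht
  set d : Polynomial ℝ := Qnp1 - Qnm1 with hdef
  have e1 := congrArg (eval x) h1
  have e2 := congrArg (eval x) h2
  have e3 := congrArg (eval x) h3
  simp only [eval_mul, eval_sub, eval_add, eval_pow, eval_C, eval_ofNat] at e1 e2 e3
  rw [hc] at e1 e2 e3
  have hd0 : d.eval x = 0 := by simp [hdef, hc, hcdef]
  have hd1e : (derivative d).eval x
      = (derivative Qnp1).eval x - (derivative Qnm1).eval x := by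
    simp [hdef, derivative_sub]
  have hd2e : (derivative (derivative d)).eval x
      = (derivative (derivative Qnp1)).eval x
        - (derivative (derivative Qnm1)).eval x := by
    simp [hdef, derivative_sub]
  have hd3e : (derivative (derivative (derivative d))).eval x
      = (derivative (derivative (derivative Qnp1))).eval x
        - (derivative (derivative (derivative Qnm1))).eval x := by
    simp [hdef, derivative_sub]
  have E1 : c * (derivative d).eval x = M * s ^ 2 := by
    rw [hd1e]; linear_combination e1
  have E2 : c * (derivative (derivative d)).eval x = 2 * M * s * t := by
    rw [hd2e]; linear_combination e2
  have E3 : c * (derivative (derivative (derivative d))).eval x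
      = 2 * M * t ^ 2 + M * s * ((derivative (derivative Qn)).eval x) := by
    rw [hd3e]; linear_combination e3
  -- key contradiction-producing step for c < 0
  rcases lt_trichotomy c 0 with hneg | hzero | hpos
  · exfalso
    by_cases hs0 : s = 0
    · -- triple root case
      have htne : t ≠ 0 := hsimple x hs0
      have ht2 : 0 < t ^ 2 :=
        lt_of_le_of_ne (sq_nonneg t) (Ne.symm (pow_ne_zero 2 htne))
      have hD1 : (derivative d).eval x = 0 := by
        have : c * (derivative d).eval x = 0 := by rw [E1, hs0]; ring
        exact (mul_eq_zero.mp this).resolve_left (ne_of_lt hneg)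
      have hD2 : (derivative (derivative d)).eval x = 0 := by
        have : c * (derivative (derivative d)).eval x = 0 := by rw [E2, hs0]; ring
        exact (mul_eq_zero.mp this).resolve_left (ne_of_lt hneg)
      have hD3 : c * (derivative (derivative (derivative d))).eval x = 2 * M * t ^ 2 := by
        rw [E3, hs0]; ring
      have hD3neg : (derivative (derivative (derivative d))).eval x < 0 := by
        by_contra h
        push_neg at h
        nlinarith [mul_pos (mul_pos (by norm_num : (0:ℝ) < 2) hMpos) ht2]
      obtain ⟨q, hq, hq6⟩ := factor3 d x hd0 hD1 hD2
      have hqx : q.eval x < 0 := by linarith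
      obtain ⟨y, hy1, hy2, hy3⟩ := left_pos d q x 3 ⟨1, by norm_num⟩ hq hqx δ hδ
      have := hleft y hy1 hy2
      have hdy : d.eval y = Qnp1.eval y - Qnm1.eval y := by simp [hdef]
      rw [hdy] at hy3; linarith
    · -- simple crossing case
      have hs2 : 0 < s ^ 2 :=
        lt_of_le_of_ne (sq_nonneg s) (Ne.symm (pow_ne_zero 2 hs0))
      have hD1neg : (derivative d).eval x < 0 := by
        by_contra h
        push_neg at h
        nlinarith [mul_pos hMpos hs2]
      obtain ⟨q, hq, hqe⟩ := factor_root d x hd0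
      have hqx : q.eval x < 0 := by rw [hqe]; exact hD1neg
      have hq' : d = (X - C x) ^ 1 * q := by rw [pow_one]; exact hq
      obtain ⟨y, hy1, hy2, hy3⟩ := left_pos d q x 1 ⟨0, by norm_num⟩ hq' hqx δ hδ
      have := hleft y hy1 hy2
      have hdy : d.eval y = Qnp1.eval y - Qnm1.eval y := by simp [hdef]
      rw [hdy] at hy3; linarith
  · exfalso
    -- c = 0 : then Qn(x) = 0, so Qn'(x) ≠ 0, contradicting e3
    have hs0 : s = 0 := by
      have : M * s ^ 2 = 0 := by rw [← E1, hzero]; ring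
      have := (mul_eq_zero.mp this).resolve_left (ne_of_gt hMpos)
      exact pow_eq_zero_iff (by norm_num) |>.mp this
    have htne : t ≠ 0 := hsimple x hs0
    have ht2 : 0 < t ^ 2 :=
      lt_of_le_of_ne (sq_nonneg t) (Ne.symm (pow_ne_zero 2 htne))
    have h0 : 2 * M * t ^ 2 = 0 := by
      linear_combination (-1 : ℝ) * E3
        + ((derivative (derivative (derivative d))).eval x) * hzero
        - M * ((derivative (derivative Qn)).eval x) * hs0
    nlinarith [mul_pos hMpos ht2]
  · exact hpos
end

section
/- Let n ≥ 1 and suppose the three Fukutani–Okamoto–Umemura identities relating Q_{n-1}, Q_n, Q_{n+1} and their derivatives hold (as in the positive-crossing lemma), and that Q_n has only simple roots. If x ∈ ℝ is a point where Q_{n+1} crosses Q_{n-1} negatively, then Q_{n+1}(x) = Q_{n-1}(x) < 0. -/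
open Polynomial

lemma cont_pos_right (P : Polynomial ℝ) {x : ℝ} (h : 0 < P.eval x) :
    ∃ ε > 0, ∀ y ∈ Set.Ioo x (x + ε), 0 < P.eval y := by
  have h2 : ∀ᶠ y in nhds x, 0 < P.eval y :=
    (P.continuous.continuousAt).eventually (lt_mem_nhds h)
  rcases Metric.eventually_nhds_iff.mp h2 with ⟨ε, hε, hball⟩
  refine ⟨ε, hε, fun y hy => hball ?_⟩
  rw [Real.dist_eq, abs_lt]
  constructor <;> [linarith [hy.1, hy.2]; linarith [hy.1, hy.2]]

lemma step_pos (P : Polynomial ℝ) {x u : ℝ} (h0 : P.eval x = 0)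
    (hd : ∀ y ∈ Set.Ioo x u, 0 < (derivative P).eval y) :
    ∀ y ∈ Set.Ioo x u, 0 < P.eval y := by
  intro y hy
  have hxu : x ≤ u := le_of_lt (hy.1.trans hy.2)
  have hmono : StrictMonoOn (fun t => P.eval t) (Set.Icc x u) := by
    apply strictMonoOn_of_deriv_pos (convex_Icc x u) (P.continuous.continuousOn)
    intro t ht
    rw [interior_Icc] at ht
    rw [Polynomial.deriv]
    exact hd t ht
  have := hmono (Set.left_mem_Icc.mpr hxu) ⟨hy.1.le, hy.2.le⟩ hy.1
  simpa [h0] using this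

lemma no_pos_right (P : Polynomial ℝ) {x δ u : ℝ} (hδ : 0 < δ)
    (hneg : ∀ y, x < y → y < x + δ → P.eval y < 0)
    (hu : x < u) (hpos : ∀ y ∈ Set.Ioo x u, 0 < P.eval y) : False := by
  set m := (x + min u (x + δ)) / 2 with hm
  have h1 : x < min u (x + δ) := lt_min hu (by linarith)
  have hx : x < m := by rw [hm]; linarith
  have h2 : m < u := by have := min_le_left u (x + δ); rw [hm]; linarith
  have h3 : m < x + δ := by have := min_le_right u (x + δ); rw [hm]; linarith
  exact absurd (hpos m ⟨hx, h2⟩) (not_lt.mpr (hneg m hx h3).le)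

/-- If `Qnp1` (i.e. `Q_{n+1}`) crosses `Qnm1` (i.e. `Q_{n-1}`) negatively at `x`,
then their common value at `x` is negative. -/
theorem negative_crossing (n : ℕ) (hn : 1 ≤ n)
    (Qnm1 Qn Qnp1 : Polynomial ℝ)
    (h1 : derivative Qnp1 * Qnm1 - Qnp1 * derivative Qnm1 = C ((2 * n + 1 : ℕ) : ℝ) * Qn ^ 2)
    (h2 : derivative (derivative Qnp1) * Qnm1 - Qnp1 * derivative (derivative Qnm1) =
      2 * C ((2 * n + 1 : ℕ) : ℝ) * Qn * derivative Qn)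
    (h3 : derivative (derivative (derivative Qnp1)) * Qnm1 -
        Qnp1 * derivative (derivative (derivative Qnm1)) =
      2 * C ((2 * n + 1 : ℕ) : ℝ) * (derivative Qn) ^ 2 +
        C ((2 * n + 1 : ℕ) : ℝ) * Qn * derivative (derivative Qn))
    (hsimple : ∀ y : ℝ, Qn.eval y = 0 → (derivative Qn).eval y ≠ 0)
    (x : ℝ)
    (hcross : Qnp1.eval x = Qnm1.eval x ∧ ∃ δ > 0,
      (∀ y, x - δ < y → y < x → Qnp1.eval y > Qnm1.eval y) ∧
      (∀ y, x < y → y < x + δ → Qnp1.eval y < Qnm1.eval y)) :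
    Qnp1.eval x = Qnm1.eval x ∧ Qnm1.eval x < 0 := by
  obtain ⟨heq, δ, hδ, hL, hR⟩ := hcross
  refine ⟨heq, ?_⟩
  by_contra hnot
  push_neg at hnot
  set c : ℝ := ((2 * n + 1 : ℕ) : ℝ) with hc_def
  have hc : 0 < c := by
    rw [hc_def]; exact_mod_cast Nat.succ_pos _
  set a := Qnm1.eval x with ha
  set p1 := (derivative Qnp1).eval x with hp1
  set p2 := (derivative (derivative Qnp1)).eval x with hp2
  set p3 := (derivative (derivative (derivative Qnp1))).eval x with hp3
  set q1 := (derivative Qnm1).eval x with hq1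
  set q2 := (derivative (derivative Qnm1)).eval x with hq2
  set q3 := (derivative (derivative (derivative Qnm1))).eval x with hq3
  set z0 := Qn.eval x with hz0
  set z1 := (derivative Qn).eval x with hz1
  set z2 := (derivative (derivative Qn)).eval x with hz2
  have e1 : p1 * a - a * q1 = c * z0 ^ 2 := by
    have := congrArg (Polynomial.eval x) h1
    simpa [heq, ← ha, ← hp1, ← hq1, ← hz0] using this
  have e2 : p2 * a - a * q2 = 2 * c * z0 * z1 := by
    have := congrArg (Polynomial.eval x) h2
    simpa [heq, mul_assoc] using this
  have e3 : p3 * a - a * q3 = 2 * c * z1 ^ 2 + c * z0 * z2 := by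
    have := congrArg (Polynomial.eval x) h3
    simpa [heq, mul_assoc] using this
  -- negativity of D on the right
  have hDneg : ∀ y, x < y → y < x + δ → (Qnp1 - Qnm1).eval y < 0 := by
    intro y hy1 hy2
    have := hR y hy1 hy2
    simp only [eval_sub]
    linarith
  have hD0 : (Qnp1 - Qnm1).eval x = 0 := by simp [eval_sub, heq]; exact sub_self _
  rcases hnot.lt_or_eq with hapos | haeq
  · -- a > 0
    -- first show d1 := p1 - q1 ≤ 0
    have hd1 : p1 - q1 ≤ 0 := by
      by_contra hgt
      push_neg at hgt
      have hdx : 0 < (derivative (Qnp1 - Qnm1)).eval x := by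
        rw [derivative_sub, eval_sub]; exact hgt
      obtain ⟨ε, hε, hpos⟩ := cont_pos_right _ hdx
      exact no_pos_right (Qnp1 - Qnm1) hδ hDneg (by linarith : x < x + ε)
        (step_pos _ hD0 hpos)
    have hz0eq : z0 = 0 := by
      by_contra hne
      have hsq : 0 < c * z0 ^ 2 := mul_pos hc (by positivity)
      nlinarith [mul_nonpos_of_nonneg_of_nonpos hapos.le hd1]
    have hd1eq : p1 - q1 = 0 := by
      rw [hz0eq] at e1
      have h0 : a * (p1 - q1) = 0 := by rw [mul_sub]; linarith [e1]
      rcases mul_eq_zero.mp h0 with h | h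
      · exact absurd h (ne_of_gt hapos)
      · exact h
    have hz1ne : z1 ≠ 0 := hsimple x hz0eq
    have hd2eq : p2 - q2 = 0 := by
      rw [hz0eq] at e2
      have : a * (p2 - q2) = 0 := by rw [mul_sub]; linarith [e2]
      rcases mul_eq_zero.mp this with h | h
      · exact absurd h (ne_of_gt hapos)
      · exact h
    have hd3pos : 0 < p3 - q3 := by
      rw [hz0eq] at e3
      have h0 : a * (p3 - q3) = 2 * c * z1 ^ 2 := by rw [mul_sub]; linarith [e3]
      have hpos : 0 < a * (p3 - q3) := by rw [h0]; positivity
      by_contra hle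
      push_neg at hle
      nlinarith [mul_nonpos_of_nonneg_of_nonpos hapos.le hle]
    -- D'''(x) > 0, D''(x) = 0, D'(x) = 0, D(x) = 0 : contradiction
    have hD3 : 0 < (derivative (derivative (derivative (Qnp1 - Qnm1)))).eval x := by
      rw [derivative_sub, derivative_sub, derivative_sub, eval_sub]; exact hd3pos
    obtain ⟨ε, hε, hpos3⟩ := cont_pos_right _ hD3
    have hD2x : (derivative (derivative (Qnp1 - Qnm1))).eval x = 0 := by
      rw [derivative_sub, derivative_sub, eval_sub]; exact hd2eq
    have hD1x : (derivative (Qnp1 - Qnm1)).eval x = 0 := by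
      rw [derivative_sub, eval_sub]; exact hd1eq
    have hpos2 := step_pos (derivative (derivative (Qnp1 - Qnm1))) hD2x hpos3
    have hpos1 := step_pos (derivative (Qnp1 - Qnm1)) hD1x hpos2
    have hpos0 := step_pos (Qnp1 - Qnm1) hD0 hpos1
    exact no_pos_right (Qnp1 - Qnm1) hδ hDneg (by linarith : x < x + ε) hpos0
  · -- a = 0
    rw [← haeq] at e1 e3
    have hz0eq : z0 = 0 := by
      by_contra hne
      have hsq : 0 < c * z0 ^ 2 := mul_pos hc (by positivity)
      nlinarith
    rw [hz0eq] at e3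
    have hz1ne : z1 ≠ 0 := hsimple x hz0eq
    have : (0:ℝ) < 2 * c * z1 ^ 2 := by positivity
    ring_nf at e3
    linarith
end

section
/- Let P and Q be real polynomials with positive leading coefficients and only simple roots, with no common real roots, whose real roots interlace. Suppose both P and Q have at least one real root, min(Z_P) > min(Z_Q), and max(Z_P) < max(Z_Q). If P(0) > 0 and Q(0) > 0, then |Z_Q ∩ (−∞,0)| = |Z_P ∩ (−∞,0)| + 1 and |Z_Q ∩ (0,∞)| = |Z_P ∩ (0,∞)|. -/
open Polynomial


open Polynomial

theorem gap_le : ∀ (n : ℕ) (S T : Set ℝ), S.Finite → T.Finite → S.ncard = n →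
    (∀ a ∈ S, ∀ b ∈ S, a < b → ∃ c ∈ T, a < c ∧ c < b) → S.ncard ≤ T.ncard + 1 := by
  intro n
  induction n using Nat.strong_induction_on with
  | _ n ih =>
    intro S T hS hT hcard h
    rcases n with _ | m
    · omega
    rcases m with _ | m
    · omega
    -- S.ncard = m + 2 ≥ 2
    have hSne : S.Nonempty := Set.nonempty_of_ncard_ne_zero (by omega)
    set m1 := sSup S with hm1
    have hm1S : m1 ∈ S := hSne.csSup_mem hS
    set S' := S \ {m1} with hS'
    have hS'f : S'.Finite := hS.diff
    have hS'card : S'.ncard = m + 1 := by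
      have h2 : S'.ncard + 1 = S.ncard := Set.ncard_diff_singleton_add_one hm1S hS
      omega
    have hS'ne : S'.Nonempty := Set.nonempty_of_ncard_ne_zero (by omega)
    set m2 := sSup S' with hm2
    have hm2S' : m2 ∈ S' := hS'ne.csSup_mem hS'f
    have hm2S : m2 ∈ S := hm2S'.1
    have hm2lt : m2 < m1 := lt_of_le_of_ne (le_csSup hS.bddAbove hm2S) hm2S'.2
    obtain ⟨c, hcT, hc1, hc2⟩ := h m2 hm2S m1 hm1S hm2lt
    have key : ∀ a ∈ S', ∀ b ∈ S', a < b → ∃ c' ∈ T \ {c}, a < c' ∧ c' < b := by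
      intro a ha b hb hab
      obtain ⟨c', hc'T, h1, h2⟩ := h a ha.1 b hb.1 hab
      refine ⟨c', ⟨hc'T, ?_⟩, h1, h2⟩
      have hb2 : b ≤ m2 := le_csSup hS'f.bddAbove hb
      intro he; rw [Set.mem_singleton_iff] at he
      subst he; exact absurd (h2.trans_le hb2) (not_lt.2 hc1.le)
    have := ih (m + 1) (by omega) S' (T \ {c}) hS'f (hT.diff) hS'card key
    have hTc : (T \ {c}).ncard + 1 = T.ncard := Set.ncard_diff_singleton_add_one hcT hT
    omega

theorem gap_le' (S T : Set ℝ) (hS : S.Finite) (hT : T.Finite)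
    (h : ∀ a ∈ S, ∀ b ∈ S, a < b → ∃ c ∈ T, a < c ∧ c < b)
    (t : ℝ) (htT : t ∈ T) (ht : ∀ s ∈ S, s < t) : S.ncard ≤ T.ncard := by
  have key : ∀ a ∈ S, ∀ b ∈ S, a < b → ∃ c ∈ T \ {t}, a < c ∧ c < b := by
    intro a ha b hb hab
    obtain ⟨c, hcT, h1, h2⟩ := h a ha b hb hab
    refine ⟨c, ⟨hcT, fun he => ?_⟩, h1, h2⟩
    rw [Set.mem_singleton_iff] at he; subst he
    exact absurd (h2.trans (ht b hb)) (lt_irrefl _)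
  have := gap_le S.ncard S (T \ {t}) hS (hT.diff) rfl key
  have hTc : (T \ {t}).ncard + 1 = T.ncard := Set.ncard_diff_singleton_add_one htT hT
  omega

theorem gap_le'' (S T : Set ℝ) (hS : S.Finite) (hT : T.Finite)
    (h : ∀ a ∈ S, ∀ b ∈ S, a < b → ∃ c ∈ T, a < c ∧ c < b)
    (u : ℝ) (huT : u ∈ T) (hu : ∀ s ∈ S, u < s) : S.ncard ≤ T.ncard := by
  have key : ∀ a ∈ S, ∀ b ∈ S, a < b → ∃ c ∈ T \ {u}, a < c ∧ c < b := by
    intro a ha b hb hab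
    obtain ⟨c, hcT, h1, h2⟩ := h a ha b hb hab
    refine ⟨c, ⟨hcT, fun he => ?_⟩, h1, h2⟩
    rw [Set.mem_singleton_iff] at he; subst he
    exact absurd ((hu a ha).trans h1) (lt_irrefl _)
  have := gap_le S.ncard S (T \ {u}) hS (hT.diff) rfl key
  have hTc : (T \ {u}).ncard + 1 = T.ncard := Set.ncard_diff_singleton_add_one huT hT
  omega

theorem gap_ge (S T : Set ℝ) (hS : S.Finite) (hT : T.Finite) (hSne : S.Nonempty)
    (h : ∀ a ∈ S, ∀ b ∈ S, a < b → ∃ c ∈ T, a < c ∧ c < b)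
    (t : ℝ) (htT : t ∈ T) (ht : ∀ s ∈ S, s < t)
    (u : ℝ) (huT : u ∈ T) (hu : ∀ s ∈ S, u < s) : S.ncard + 1 ≤ T.ncard := by
  obtain ⟨s0, hs0⟩ := hSne
  have hut : u ≠ t := ne_of_lt ((hu s0 hs0).trans (ht s0 hs0))
  have key : ∀ a ∈ S, ∀ b ∈ S, a < b → ∃ c ∈ T \ {u}, a < c ∧ c < b := by
    intro a ha b hb hab
    obtain ⟨c, hcT, h1, h2⟩ := h a ha b hb hab
    refine ⟨c, ⟨hcT, fun he => ?_⟩, h1, h2⟩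
    rw [Set.mem_singleton_iff] at he; subst he
    exact absurd ((hu a ha).trans h1) (lt_irrefl _)
  have := gap_le' S (T \ {u}) hS (hT.diff) key t ⟨htT, hut.symm⟩ ht
  have hTc : (T \ {u}).ncard + 1 = T.ncard := Set.ncard_diff_singleton_add_one huT hT
  omega

open Polynomial

theorem multiset_prod_pos_iff (s : Multiset ℝ) (h : ∀ x ∈ s, x ≠ 0) :
    0 < s.prod ↔ Even (Multiset.card (s.filter (fun x => x < 0))) := by
  induction s using Multiset.induction_on with
  | empty => simp
  | cons a s ih =>
    have ha : a ≠ 0 := h a (Multiset.mem_cons_self a s)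
    have hs : ∀ x ∈ s, x ≠ 0 := fun x hx => h x (Multiset.mem_cons_of_mem hx)
    have hprod : s.prod ≠ 0 := Multiset.prod_ne_zero (fun h0 => hs 0 h0 rfl)
    rw [Multiset.prod_cons]
    rcases lt_or_gt_of_ne ha with hneg | hpos
    · rw [Multiset.filter_cons_of_pos (p := fun x : ℝ => x < 0) s hneg, Multiset.card_cons, Nat.even_add_one,
        ← ih hs]
      constructor
      · intro hm hp
        exact absurd (mul_pos_iff.mp hm) (by
          rintro (⟨h1, _⟩ | ⟨_, h2⟩)
          · exact absurd h1 (not_lt.2 hneg.le)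
          · exact absurd hp (not_lt.2 h2.le))
      · intro hnp
        have hp : s.prod < 0 := lt_of_le_of_ne (not_lt.1 hnp) hprod
        exact mul_pos_of_neg_of_neg hneg hp
    · rw [Multiset.filter_cons_of_neg (p := fun x : ℝ => x < 0) s (not_lt.2 hpos.le), ← ih hs]
      constructor
      · intro hm
        rcases mul_pos_iff.mp hm with ⟨_, h2⟩ | ⟨h1, _⟩
        · exact h2
        · exact absurd hpos (not_lt.2 h1.le)
      · intro hp; exact mul_pos hpos hp

theorem poly_pos_of_no_roots (g : Polynomial ℝ) (hlead : 0 < g.leadingCoeff)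
    (hg : ∀ x : ℝ, g.eval x ≠ 0) (x : ℝ) : 0 < g.eval x := by
  by_contra hx
  push_neg at hx
  have hx' : g.eval x < 0 := lt_of_le_of_ne hx (hg x)
  obtain ⟨y, hy⟩ : ∃ y, 0 < g.eval y := by
    rcases le_or_gt g.degree 0 with hdeg | hdeg
    · obtain ⟨c, rfl⟩ : ∃ c, g = C c := ⟨g.coeff 0, (Polynomial.eq_C_of_degree_le_zero hdeg)⟩
      exact ⟨0, by simpa [leadingCoeff] using hlead⟩
    · have := Polynomial.tendsto_atTop_of_leadingCoeff_nonneg g hdeg hlead.le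
      exact (this.eventually_gt_atTop 0).exists
  have hcont : ContinuousOn (fun t => g.eval t) (Set.uIcc x y) :=
    (Polynomial.continuous g).continuousOn
  have h0 : (0 : ℝ) ∈ Set.uIcc (g.eval x) (g.eval y) :=
    Set.mem_uIcc.2 (Or.inl ⟨hx'.le, hy.le⟩)
  obtain ⟨z, _, hz⟩ := intermediate_value_uIcc hcont h0
  exact hg z hz

theorem roots_nodup_of_simple (P : Polynomial ℝ) (hP : P ≠ 0)
    (hsimple : ∀ x : ℝ, P.eval x = 0 → (derivative P).eval x ≠ 0) : P.roots.Nodup := by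
  rw [Multiset.nodup_iff_count_le_one]
  intro a
  by_contra hc
  push_neg at hc
  rw [Polynomial.count_roots] at hc
  have hroot : P.IsRoot a := (Polynomial.rootMultiplicity_pos hP).mp (by omega)
  have hd : (derivative P).rootMultiplicity a = P.rootMultiplicity a - 1 :=
    Polynomial.derivative_rootMultiplicity_of_root hroot
  have hdne : derivative P ≠ 0 := by
    intro h0
    rw [h0, Polynomial.rootMultiplicity_zero] at hd
    omega
  have : (derivative P).IsRoot a :=
    (Polynomial.rootMultiplicity_pos hdne).mp (by omega)
  exact hsimple a hroot this

theorem even_pos_card (P : Polynomial ℝ) (hlead : 0 < P.leadingCoeff)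
    (hsimple : ∀ x : ℝ, P.eval x = 0 → (derivative P).eval x ≠ 0)
    (hP0 : 0 < P.eval 0) :
    Even (({x : ℝ | P.eval x = 0} ∩ Set.Ioi 0).ncard) := by
  have hPne : P ≠ 0 := fun h => by simp [h, leadingCoeff] at hlead
  have hnodup := roots_nodup_of_simple P hPne hsimple
  obtain ⟨g, hg⟩ := P.prod_multiset_X_sub_C_dvd
  set pr : Polynomial ℝ := (P.roots.map fun a => X - C a).prod with hpr
  have hprmonic : pr.Monic :=
    Polynomial.monic_multiset_prod_of_monic _ _ (fun i _ => Polynomial.monic_X_sub_C i)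
  have hgne : g ≠ 0 := fun h => hPne (by rw [hg, h, mul_zero])
  have hprne : pr ≠ 0 := hprmonic.ne_zero
  have hgroots : g.roots = 0 := by
    have hmul : pr * g ≠ 0 := mul_ne_zero hprne hgne
    have := Polynomial.roots_mul hmul
    rw [← hg, Polynomial.roots_multiset_prod_X_sub_C] at this
    have h2 : P.roots = P.roots + g.roots := this
    exact (left_eq_add.mp h2)
  have hgnoroot : ∀ x : ℝ, g.eval x ≠ 0 := by
    intro x hx
    have hm : x ∈ g.roots := (Polynomial.mem_roots hgne).2 hx
    rw [hgroots] at hm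
    exact absurd hm (Multiset.notMem_zero x)
  have hglead : 0 < g.leadingCoeff := by
    have hl : P.leadingCoeff = g.leadingCoeff := by
      rw [hg, Polynomial.leadingCoeff_mul, hprmonic.leadingCoeff, one_mul]
    rwa [hl] at hlead
  have hg0 : 0 < g.eval 0 := poly_pos_of_no_roots g hglead hgnoroot 0
  have heval : P.eval 0 = (P.roots.map fun a => -a).prod * g.eval 0 := by
    conv_lhs => rw [hg]
    rw [Polynomial.eval_mul]
    congr 1
    rw [hpr, Polynomial.eval_multiset_prod, Multiset.map_map]
    congr 1
    apply Multiset.map_congr rfl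
    intro a _
    simp
  have hprodpos : 0 < (P.roots.map fun a => -a).prod := by
    rw [heval] at hP0
    rcases mul_pos_iff.mp hP0 with ⟨h1, _⟩ | ⟨_, h2⟩
    · exact h1
    · linarith
  have hne0 : ∀ x ∈ P.roots.map (fun a => -a), x ≠ 0 := by
    intro x hx
    obtain ⟨r, hr, rfl⟩ := Multiset.mem_map.mp hx
    intro h0
    have hr0 : r = 0 := by linarith
    subst hr0
    have : P.eval 0 = 0 := Polynomial.isRoot_of_mem_roots hr
    linarith
  have heven := (multiset_prod_pos_iff _ hne0).mp hprodpos
  rw [← Multiset.countP_eq_card_filter, Multiset.countP_map] at heven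
  have hfc : (Multiset.filter (fun a : ℝ => -a < 0) P.roots) =
      (Multiset.filter (fun a : ℝ => 0 < a) P.roots) :=
    Multiset.filter_congr (fun x _ => by constructor <;> intro <;> linarith)
  rw [hfc] at heven
  have hset : {x : ℝ | P.eval x = 0} ∩ Set.Ioi 0 =
      ↑(P.roots.toFinset.filter fun r => 0 < r) := by
    ext x
    simp only [Set.mem_inter_iff, Set.mem_setOf_eq, Set.mem_Ioi, Finset.coe_filter,
      Multiset.mem_toFinset, Polynomial.mem_roots, hPne, ne_eq, not_false_eq_true,
      true_and, Set.mem_setOf_eq, Polynomial.IsRoot.def]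
  rw [hset, Set.ncard_coe_finset, ← Multiset.toFinset_filter,
    Multiset.toFinset_card_of_nodup (hnodup.filter _)]
  exact heven
/-- The set of real roots of a real polynomial. -/
def realRoots (P : Polynomial ℝ) : Set ℝ := {x : ℝ | P.eval x = 0}

theorem interlacing_root_count_pos_pos (P Q : Polynomial ℝ)
    (hPlead : 0 < P.leadingCoeff) (hQlead : 0 < Q.leadingCoeff)
    (hPsimple : ∀ x : ℝ, P.eval x = 0 → (derivative P).eval x ≠ 0)
    (hQsimple : ∀ x : ℝ, Q.eval x = 0 → (derivative Q).eval x ≠ 0)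
    (hnocommon : ∀ x : ℝ, ¬(P.eval x = 0 ∧ Q.eval x = 0))
    (hinter1 : ∀ a ∈ realRoots P, ∀ b ∈ realRoots P, a < b →
      ∃ c ∈ realRoots Q, a < c ∧ c < b)
    (hinter2 : ∀ a ∈ realRoots Q, ∀ b ∈ realRoots Q, a < b →
      ∃ c ∈ realRoots P, a < c ∧ c < b)
    (hPne : (realRoots P).Nonempty) (hQne : (realRoots Q).Nonempty)
    (hmin : sInf (realRoots P) > sInf (realRoots Q))
    (hmax : sSup (realRoots P) < sSup (realRoots Q))
    (hP0 : P.eval 0 > 0) (hQ0 : Q.eval 0 > 0) :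
    (realRoots Q ∩ Set.Iio 0).ncard = (realRoots P ∩ Set.Iio 0).ncard + 1 ∧
    (realRoots Q ∩ Set.Ioi 0).ncard = (realRoots P ∩ Set.Ioi 0).ncard := by
  have hPne0 : P ≠ 0 := fun h => by simp [h, leadingCoeff] at hPlead
  have hQne0 : Q ≠ 0 := fun h => by simp [h, leadingCoeff] at hQlead
  have hPf : (realRoots P).Finite := by
    apply Set.Finite.ofFinset P.roots.toFinset
    intro x
    simp [realRoots, Polynomial.mem_roots, hPne0, Polynomial.IsRoot.def]
  have hQf : (realRoots Q).Finite := by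
    apply Set.Finite.ofFinset Q.roots.toFinset
    intro x
    simp [realRoots, Polynomial.mem_roots, hQne0, Polynomial.IsRoot.def]
  have h0P : (0 : ℝ) ∉ realRoots P := fun h => by
    simp only [realRoots, Set.mem_setOf_eq] at h; linarith
  have h0Q : (0 : ℝ) ∉ realRoots Q := fun h => by
    simp only [realRoots, Set.mem_setOf_eq] at h; linarith
  have hsplit : ∀ (Z : Set ℝ), Z.Finite → (0 : ℝ) ∉ Z →
      Z.ncard = (Z ∩ Set.Iio 0).ncard + (Z ∩ Set.Ioi 0).ncard := by
    intro Z hZ h0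
    have hU : Z = (Z ∩ Set.Iio 0) ∪ (Z ∩ Set.Ioi 0) := by
      ext x
      constructor
      · intro hx
        rcases lt_trichotomy x 0 with h | h | h
        · exact Or.inl ⟨hx, h⟩
        · exact absurd (h ▸ hx) h0
        · exact Or.inr ⟨hx, h⟩
      · rintro (⟨hx, _⟩ | ⟨hx, _⟩) <;> exact hx
    calc Z.ncard = ((Z ∩ Set.Iio 0) ∪ (Z ∩ Set.Ioi 0)).ncard := by rw [← hU]
      _ = (Z ∩ Set.Iio 0).ncard + (Z ∩ Set.Ioi 0).ncard :=
        Set.ncard_union_eq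
          (Set.disjoint_of_subset Set.inter_subset_right Set.inter_subset_right
            ((Set.Iic_disjoint_Ioi (le_refl 0)).mono_left Set.Iio_subset_Iic_self))
          (hZ.inter_of_left _) (hZ.inter_of_left _)
  -- extreme roots of Q
  have htQmem : sSup (realRoots Q) ∈ realRoots Q := hQne.csSup_mem hQf
  have huQmem : sInf (realRoots Q) ∈ realRoots Q := hQne.csInf_mem hQf
  have htQgt : ∀ s ∈ realRoots P, s < sSup (realRoots Q) := fun s hs =>
    lt_of_le_of_lt (le_csSup hPf.bddAbove hs) hmax
  have huQlt : ∀ s ∈ realRoots P, sInf (realRoots Q) < s := fun s hs =>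
    lt_of_lt_of_le hmin (csInf_le hPf.bddBelow hs)
  -- totals
  have total_le : (realRoots Q).ncard ≤ (realRoots P).ncard + 1 :=
    gap_le _ _ _ hQf hPf rfl hinter2
  have total_ge : (realRoots P).ncard + 1 ≤ (realRoots Q).ncard :=
    gap_ge _ _ hPf hQf hPne hinter1 _ htQmem htQgt _ huQmem huQlt
  -- positive parts
  have hinterpos : ∀ a ∈ realRoots Q ∩ Set.Ioi 0, ∀ b ∈ realRoots Q ∩ Set.Ioi 0,
      a < b → ∃ c ∈ realRoots P ∩ Set.Ioi 0, a < c ∧ c < b := by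
    intro a ha b hb hab
    obtain ⟨c, hc, h1, h2⟩ := hinter2 a ha.1 b hb.1 hab
    exact ⟨c, ⟨hc, lt_trans ha.2 h1⟩, h1, h2⟩
  have hinterpos' : ∀ a ∈ realRoots P ∩ Set.Ioi 0, ∀ b ∈ realRoots P ∩ Set.Ioi 0,
      a < b → ∃ c ∈ realRoots Q ∩ Set.Ioi 0, a < c ∧ c < b := by
    intro a ha b hb hab
    obtain ⟨c, hc, h1, h2⟩ := hinter1 a ha.1 b hb.1 hab
    exact ⟨c, ⟨hc, lt_trans ha.2 h1⟩, h1, h2⟩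
  have pos_le : (realRoots Q ∩ Set.Ioi 0).ncard ≤ (realRoots P ∩ Set.Ioi 0).ncard + 1 :=
    gap_le _ _ _ (hQf.inter_of_left _) (hPf.inter_of_left _) rfl hinterpos
  have pos_ge : (realRoots P ∩ Set.Ioi 0).ncard ≤ (realRoots Q ∩ Set.Ioi 0).ncard := by
    rcases Set.eq_empty_or_nonempty (realRoots P ∩ Set.Ioi 0) with he | ⟨s0, hs0⟩
    · simp [he]
    · apply gap_le' _ _ (hPf.inter_of_left _) (hQf.inter_of_left _) hinterpos'
        (sSup (realRoots Q))
        ⟨htQmem, lt_trans hs0.2 (htQgt s0 hs0.1)⟩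
        (fun s hs => htQgt s hs.1)
  -- parity
  have hevenP : Even ((realRoots P ∩ Set.Ioi 0).ncard) :=
    even_pos_card P hPlead hPsimple hP0
  have hevenQ : Even ((realRoots Q ∩ Set.Ioi 0).ncard) :=
    even_pos_card Q hQlead hQsimple hQ0
  obtain ⟨a, ha⟩ := hevenP
  obtain ⟨b, hb⟩ := hevenQ
  have hsplitP := hsplit _ hPf h0P
  have hsplitQ := hsplit _ hQf h0Q
  omega
end

section
/- Let P and Q be real polynomials with positive leading coefficients and only simple roots, with no common real roots, whose real roots interlace. Suppose both P and Q have at least one real root, min(Z_P) > min(Z_Q), and max(Z_P) < max(Z_Q). If P(0) > 0 and Q(0) < 0, then |Z_Q ∩ (−∞,0)| = |Z_P ∩ (−∞,0)| and |Z_Q ∩ (0,∞)| = |Z_P ∩ (0,∞)| + 1. -/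
open Polynomial

/-- Between-ness injection lemma: if between any two elements of `s` there is an
element of `t`, then `s.card ≤ t.card + 1`. -/
lemma cardLemma : ∀ (n : ℕ) (s t : Finset ℝ), s.card = n →
    (∀ a1 ∈ s, ∀ a2 ∈ s, a1 < a2 → ∃ b ∈ t, a1 < b ∧ b < a2) →
    s.card ≤ t.card + 1 := by
  intro n
  induction n with
  | zero => intro s t h _; simp [h]
  | succ k ih =>
    intro s t hcard hyp
    rcases Nat.eq_zero_or_pos k with hk | hk
    · omega
    · have hne : s.Nonempty := Finset.card_pos.mp (by omega)
      set a0 := s.min' hne with ha0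
      set s' := s.erase a0 with hs'
      have hs'card : s'.card = k := by
        rw [hs', Finset.card_erase_of_mem (s.min'_mem hne), hcard]; omega
      have hs'ne : s'.Nonempty := Finset.card_pos.mp (by omega)
      set a1 := s'.min' hs'ne with ha1
      have ha1s : a1 ∈ s := Finset.mem_of_mem_erase (s'.min'_mem hs'ne)
      have ha01 : a0 < a1 :=
        lt_of_le_of_ne (s.min'_le _ ha1s) (Ne.symm (Finset.ne_of_mem_erase (s'.min'_mem hs'ne)))
      obtain ⟨b, hbt, hab, hba⟩ := hyp a0 (s.min'_mem hne) a1 ha1s ha01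
      have key : ∀ x ∈ s', ∀ y ∈ s', x < y → ∃ b' ∈ t.erase b, x < b' ∧ b' < y := by
        intro x hx y hy hxy
        obtain ⟨b', hb't, h1, h2⟩ := hyp x (Finset.mem_of_mem_erase hx) y (Finset.mem_of_mem_erase hy) hxy
        refine ⟨b', Finset.mem_erase.mpr ⟨?_, hb't⟩, h1, h2⟩
        have hlt : b < b' := lt_of_lt_of_le hba (le_trans (s'.min'_le x hx) (le_of_lt h1))
        exact (ne_of_gt hlt)
      have h2 := ih s' (t.erase b) hs'card key
      have htb : (t.erase b).card = t.card - 1 := Finset.card_erase_of_mem hbt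
      have h3 : 1 ≤ t.card := Finset.card_pos.mpr ⟨b, hbt⟩
      omega

lemma sq_dvd_deriv_root (P : Polynomial ℝ) (r : ℝ) (h : (X - C r)^2 ∣ P) :
    (derivative P).eval r = 0 := by
  obtain ⟨h1, rfl⟩ := h
  simp [derivative_mul, derivative_pow]

lemma root_count_one (P : Polynomial ℝ) (hP : P ≠ 0)
    (hsimple : ∀ x : ℝ, P.eval x = 0 → (derivative P).eval x ≠ 0)
    (r : ℝ) (hr : P.eval r = 0) : P.roots.count r = 1 := by
  rw [count_roots]
  have h1 : 1 ≤ P.rootMultiplicity r := (rootMultiplicity_pos hP).mpr hr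
  by_contra hne
  have h2 : 2 ≤ P.rootMultiplicity r := by omega
  have hdvd : (X - C r)^2 ∣ P :=
    dvd_trans (pow_dvd_pow _ h2) (P.pow_rootMultiplicity_dvd r)
  exact hsimple r hr (sq_dvd_deriv_root P r hdvd)

/-- The sign of `P.eval 0` is `(-1)` to the number of positive real roots. -/
lemma sign_eval_zero (P : Polynomial ℝ) (hP : P ≠ 0)
    (hRone : ∀ x : ℝ, P.eval x = 0 → P.roots.count x = 1)
    (hsimple : ∀ x : ℝ, P.eval x = 0 → (derivative P).eval x ≠ 0)
    (hlc : 0 < P.leadingCoeff) (h0 : P.eval 0 ≠ 0) :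
    ∃ c : ℝ, 0 < c ∧
      P.eval 0 = (-1 : ℝ)^((P.roots.toFinset.filter (fun x => 0 < x)).card) * c := by
  set R := P.roots with hR
  have hdvd : (R.map fun a => X - C a).prod ∣ P := prod_multiset_X_sub_C_dvd P
  obtain ⟨g, hPg⟩ := hdvd
  have hgroot : ∀ x : ℝ, g.eval x ≠ 0 := by
    intro x hx
    have hPx : P.eval x = 0 := by rw [hPg]; simp [hx]
    have hxR : x ∈ R := by
      rw [hR, mem_roots hP]; exact hPx
    have h1 : (X - C x) ∣ (R.map fun a => X - C a).prod :=
      Multiset.dvd_prod (Multiset.mem_map.mpr ⟨x, hxR, rfl⟩)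
    have h2 : (X - C x) ∣ g := dvd_iff_isRoot.mpr hx
    have h3 : (X - C x)^2 ∣ P := by
      rw [hPg, sq]; exact mul_dvd_mul h1 h2
    exact hsimple x hPx (sq_dvd_deriv_root P x h3)
  have hg0 : g ≠ 0 := fun h => hgroot 0 (by simp [h])
  have hmon : ((R.map fun a => X - C a).prod).Monic :=
    monic_multiset_prod_of_monic _ _ (fun a _ => monic_X_sub_C a)
  have hglc : 0 < g.leadingCoeff := by
    have : P.leadingCoeff = g.leadingCoeff := by
      rw [hPg, leadingCoeff_mul, hmon.leadingCoeff, one_mul]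
    rwa [this] at hlc
  have hgpos : 0 < g.eval 0 := by
    rcases lt_or_ge 0 (g.eval 0) with h | h
    · exact h
    have hgne : g.eval 0 < 0 := lt_of_le_of_ne h (hgroot 0)
    rcases Nat.eq_zero_or_pos g.natDegree with hd | hd
    · exfalso
      have heq : g.leadingCoeff = g.eval 0 := by
        conv_rhs => rw [eq_C_of_natDegree_eq_zero hd]
        simp [leadingCoeff, hd]
      linarith
    · exfalso
      have htend : Filter.Tendsto (fun x => g.eval x) Filter.atTop Filter.atTop :=
        g.tendsto_atTop_of_leadingCoeff_nonneg (natDegree_pos_iff_degree_pos.mp hd) hglc.le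
      obtain ⟨x, hx⟩ := (htend.eventually_ge_atTop 1).and (Filter.eventually_ge_atTop 0) |>.exists
      have hcont : ContinuousOn (fun y => g.eval y) (Set.Icc 0 x) :=
        (g.continuous_aeval).continuousOn
      have : (0:ℝ) ∈ Set.Icc (g.eval 0) (g.eval x) := ⟨le_of_lt hgne, by linarith [hx.1]⟩
      obtain ⟨c, _, hc⟩ := intermediate_value_Icc hx.2 hcont this
      exact hgroot c hc
  have hnodup : R.Nodup := by
    rw [Multiset.nodup_iff_count_le_one]
    intro x
    rcases Nat.eq_zero_or_pos (R.count x) with h | h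
    · omega
    · have : x ∈ R := Multiset.count_pos.mp h
      rw [hR, mem_roots hP] at this
      exact le_of_eq (hRone x this)
  have hRval : R.toFinset.val = R := by
    rw [Multiset.toFinset_val, Multiset.dedup_eq_self.mpr hnodup]
  have hevalprod : P.eval 0 = (∏ r ∈ R.toFinset, (-r)) * g.eval 0 := by
    rw [hPg, eval_mul, eval_multiset_prod]
    congr 1
    rw [Finset.prod, ← hRval]
    simp [Multiset.map_map, Function.comp]
  have h0notin : (0:ℝ) ∉ R.toFinset := by
    intro h
    have := Multiset.mem_toFinset.mp h
    rw [hR, mem_roots hP] at this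
    exact h0 this
  have hsplit : R.toFinset.filter (fun x => ¬ 0 < x) = R.toFinset.filter (fun x => x < 0) := by
    apply Finset.filter_congr
    intro x hx
    have : x ≠ 0 := fun h => h0notin (h ▸ hx)
    exact ⟨fun h => this.lt_or_gt.resolve_right h, fun h => not_lt.mpr h.le⟩
  set spos := R.toFinset.filter (fun x => 0 < x) with hspos
  set sneg := R.toFinset.filter (fun x => x < 0) with hsneg
  have hprodsplit : ∏ r ∈ R.toFinset, (-r) = (∏ r ∈ spos, (-r)) * (∏ r ∈ sneg, (-r)) := by
    rw [← Finset.prod_filter_mul_prod_filter_not R.toFinset (fun x => 0 < x) (fun r => -r), hsplit]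
  have h1 : ∏ r ∈ spos, (-r) = (-1:ℝ)^spos.card * ∏ r ∈ spos, r := by
    rw [← Finset.prod_const, ← Finset.prod_mul_distrib]
    simp
  have hposprod : 0 < ∏ r ∈ spos, r :=
    Finset.prod_pos (fun i hi => (Finset.mem_filter.mp hi).2)
  have hnegprod : 0 < ∏ r ∈ sneg, (-r) :=
    Finset.prod_pos (fun i hi => by have := (Finset.mem_filter.mp hi).2; linarith)
  refine ⟨(∏ r ∈ spos, r) * (∏ r ∈ sneg, (-r)) * g.eval 0, by positivity, ?_⟩
  rw [hevalprod, hprodsplit, h1]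
  ring

lemma realRoots_eq (P : Polynomial ℝ) (hP : P ≠ 0) :
    realRoots P = ↑P.roots.toFinset := by
  ext x
  simp [realRoots, mem_roots, hP, IsRoot]

lemma inter_ncard (P : Polynomial ℝ) (hP : P ≠ 0) (p : ℝ → Prop) [DecidablePred p]
    (s : Set ℝ) (hs : ∀ x, x ∈ s ↔ p x) :
    (realRoots P ∩ s).ncard = (P.roots.toFinset.filter p).card := by
  rw [realRoots_eq P hP]
  rw [show (↑P.roots.toFinset : Set ℝ) ∩ s = ↑(P.roots.toFinset.filter p) by
    ext x; simp [hs x]]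
  exact Set.ncard_coe_finset _

theorem interlacing_root_count_pos_neg (P Q : Polynomial ℝ)
    (hPlead : 0 < P.leadingCoeff) (hQlead : 0 < Q.leadingCoeff)
    (hPsimple : ∀ x : ℝ, P.eval x = 0 → (derivative P).eval x ≠ 0)
    (hQsimple : ∀ x : ℝ, Q.eval x = 0 → (derivative Q).eval x ≠ 0)
    (hnocommon : ∀ x : ℝ, ¬(P.eval x = 0 ∧ Q.eval x = 0))
    (hinter1 : ∀ a ∈ realRoots P, ∀ b ∈ realRoots P, a < b →
      ∃ c ∈ realRoots Q, a < c ∧ c < b)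
    (hinter2 : ∀ a ∈ realRoots Q, ∀ b ∈ realRoots Q, a < b →
      ∃ c ∈ realRoots P, a < c ∧ c < b)
    (hPne : (realRoots P).Nonempty) (hQne : (realRoots Q).Nonempty)
    (hmin : sInf (realRoots P) > sInf (realRoots Q))
    (hmax : sSup (realRoots P) < sSup (realRoots Q))
    (hP0 : P.eval 0 > 0) (hQ0 : Q.eval 0 < 0) :
    (realRoots Q ∩ Set.Iio 0).ncard = (realRoots P ∩ Set.Iio 0).ncard ∧
    (realRoots Q ∩ Set.Ioi 0).ncard = (realRoots P ∩ Set.Ioi 0).ncard + 1 := by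
  have hPne0 : P ≠ 0 := leadingCoeff_ne_zero.mp (ne_of_gt hPlead)
  have hQne0 : Q ≠ 0 := leadingCoeff_ne_zero.mp (ne_of_gt hQlead)
  have hPfin : (realRoots P).Finite := by
    rw [realRoots_eq P hPne0]; exact P.roots.toFinset.finite_toSet
  have hQfin : (realRoots Q).Finite := by
    rw [realRoots_eq Q hQne0]; exact Q.roots.toFinset.finite_toSet
  set qmin := sInf (realRoots Q) with hqmin
  set qmax := sSup (realRoots Q) with hqmax
  have hqminmem : qmin ∈ realRoots Q := hQne.csInf_mem hQfin
  have hqmaxmem : qmax ∈ realRoots Q := hQne.csSup_mem hQfin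
  have hQbounds : ∀ x ∈ realRoots Q, qmin ≤ x ∧ x ≤ qmax := fun x hx =>
    ⟨csInf_le hQfin.bddBelow hx, le_csSup hQfin.bddAbove hx⟩
  have hPbounds : ∀ x ∈ realRoots P, qmin < x ∧ x < qmax := by
    intro x hx
    constructor
    · exact lt_of_lt_of_le hmin (csInf_le hPfin.bddBelow hx)
    · exact lt_of_le_of_lt (le_csSup hPfin.bddAbove hx) hmax
  have hqminmax : qmin < qmax := by
    obtain ⟨p, hp⟩ := hPne
    exact lt_trans (hPbounds p hp).1 (hPbounds p hp).2
  -- finsets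
  set sP := P.roots.toFinset with hsP
  set sQ := Q.roots.toFinset with hsQ
  have hmemP : ∀ x : ℝ, x ∈ sP ↔ x ∈ realRoots P := by
    intro x; rw [hsP, Multiset.mem_toFinset, mem_roots hPne0]; exact Iff.rfl
  have hmemQ : ∀ x : ℝ, x ∈ sQ ↔ x ∈ realRoots Q := by
    intro x; rw [hsQ, Multiset.mem_toFinset, mem_roots hQne0]; exact Iff.rfl
  -- cardinality abbreviations
  set a := (sP.filter (fun x => x < 0)).card with hadef
  set b := (sP.filter (fun x => 0 < x)).card with hbdef
  set c := (sQ.filter (fun x => x < 0)).card with hcdef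
  set d := (sQ.filter (fun x => 0 < x)).card with hddef
  -- 0 is not a root
  have h0P : (0:ℝ) ∉ sP := fun h => by
    have := (hmemP 0).mp h; simp [realRoots] at this; linarith
  have h0Q : (0:ℝ) ∉ sQ := fun h => by
    have := (hmemQ 0).mp h; simp [realRoots] at this; linarith
  -- total counts
  have hsplitP : sP.filter (fun x => ¬ x < 0) = sP.filter (fun x => 0 < x) := by
    apply Finset.filter_congr
    intro x hx
    have hne : x ≠ 0 := fun h => h0P (h ▸ hx)
    exact ⟨fun h => hne.lt_or_gt.resolve_left h, fun h => not_lt.mpr h.le⟩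
  have hsplitQ : sQ.filter (fun x => ¬ x < 0) = sQ.filter (fun x => 0 < x) := by
    apply Finset.filter_congr
    intro x hx
    have hne : x ≠ 0 := fun h => h0Q (h ▸ hx)
    exact ⟨fun h => hne.lt_or_gt.resolve_left h, fun h => not_lt.mpr h.le⟩
  have htotP : a + b = sP.card := by
    rw [hadef, hbdef, ← hsplitP]
    exact Finset.card_filter_add_card_filter_not _
  have htotQ : c + d = sQ.card := by
    rw [hcdef, hddef, ← hsplitQ]
    exact Finset.card_filter_add_card_filter_not _
  -- cardLemma applications
  have hc_le : c ≤ a + 1 := by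
    apply cardLemma c _ _ rfl
    intro x hx y hy hxy
    obtain ⟨z, hz, h1, h2⟩ := hinter2 x ((hmemQ x).mp (Finset.mem_of_mem_filter x hx))
      y ((hmemQ y).mp (Finset.mem_of_mem_filter y hy)) hxy
    have hy0 : y < 0 := (Finset.mem_filter.mp hy).2
    exact ⟨z, Finset.mem_filter.mpr ⟨(hmemP z).mpr hz, lt_trans h2 hy0⟩, h1, h2⟩
  have hd_le : d ≤ b + 1 := by
    apply cardLemma d _ _ rfl
    intro x hx y hy hxy
    obtain ⟨z, hz, h1, h2⟩ := hinter2 x ((hmemQ x).mp (Finset.mem_of_mem_filter x hx))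
      y ((hmemQ y).mp (Finset.mem_of_mem_filter y hy)) hxy
    have hx0 : 0 < x := (Finset.mem_filter.mp hx).2
    exact ⟨z, Finset.mem_filter.mpr ⟨(hmemP z).mpr hz, lt_trans hx0 h1⟩, h1, h2⟩
  have hm_le : sQ.card ≤ sP.card + 1 := by
    apply cardLemma sQ.card _ _ rfl
    intro x hx y hy hxy
    obtain ⟨z, hz, h1, h2⟩ := hinter2 x ((hmemQ x).mp hx) y ((hmemQ y).mp hy) hxy
    exact ⟨z, (hmemP z).mpr hz, h1, h2⟩
  -- middle part of sQ
  set sQmid := sQ.filter (fun x => qmin < x ∧ x < qmax) with hsQmid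
  have hsQmidcard : sQmid.card + 2 = sQ.card := by
    have hrest : sQ.filter (fun x => ¬ (qmin < x ∧ x < qmax)) = {qmin, qmax} := by
      ext x
      simp only [Finset.mem_filter, Finset.mem_insert, Finset.mem_singleton]
      constructor
      · rintro ⟨hx, hnot⟩
        obtain ⟨h1, h2⟩ := hQbounds x ((hmemQ x).mp hx)
        by_contra hcon
        push_neg at hcon
        exact hnot ⟨lt_of_le_of_ne h1 (Ne.symm hcon.1), lt_of_le_of_ne h2 hcon.2⟩
      · rintro (rfl | rfl)
        · exact ⟨(hmemQ _).mpr hqminmem, fun h => lt_irrefl _ h.1⟩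
        · exact ⟨(hmemQ _).mpr hqmaxmem, fun h => lt_irrefl _ h.2⟩
    have hcard2 : ({qmin, qmax} : Finset ℝ).card = 2 :=
      Finset.card_pair (ne_of_lt hqminmax)
    have := Finset.card_filter_add_card_filter_not
      (s := sQ) (p := fun x => qmin < x ∧ x < qmax)
    rw [hrest, hcard2] at this
    exact this
  have hn_le : sP.card ≤ sQmid.card + 1 := by
    apply cardLemma sP.card _ _ rfl
    intro x hx y hy hxy
    obtain ⟨z, hz, h1, h2⟩ := hinter1 x ((hmemP x).mp hx) y ((hmemP y).mp hy) hxy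
    refine ⟨z, Finset.mem_filter.mpr ⟨(hmemQ z).mpr hz, ?_, ?_⟩, h1, h2⟩
    · exact lt_trans (hPbounds x ((hmemP x).mp hx)).1 h1
    · exact lt_trans h2 (hPbounds y ((hmemP y).mp hy)).2
  have htotal : sQ.card = sP.card + 1 := by omega
  -- parity
  have hbeven : b % 2 = 0 := by
    obtain ⟨c0, hc0pos, hc0⟩ := sign_eval_zero P hPne0
      (root_count_one P hPne0 hPsimple) hPsimple hPlead (ne_of_gt hP0)
    rcases Nat.even_or_odd b with h | h
    · exact Nat.even_iff.mp h
    · exfalso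
      rw [← hbdef] at hc0
      rw [h.neg_one_pow] at hc0
      linarith
  have hdodd : d % 2 = 1 := by
    obtain ⟨c0, hc0pos, hc0⟩ := sign_eval_zero Q hQne0
      (root_count_one Q hQne0 hQsimple) hQsimple hQlead (ne_of_lt hQ0)
    rcases Nat.even_or_odd d with h | h
    · exfalso
      rw [← hddef] at hc0
      rw [h.neg_one_pow] at hc0
      linarith
    · exact Nat.odd_iff.mp h
  -- conclude
  have hca : c = a ∧ d = b + 1 := by omega
  constructor
  · rw [inter_ncard Q hQne0 (fun x => x < 0) _ (fun x => Set.mem_Iio),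
        inter_ncard P hPne0 (fun x => x < 0) _ (fun x => Set.mem_Iio)]
    exact hca.1
  · rw [inter_ncard Q hQne0 (fun x => 0 < x) _ (fun x => Set.mem_Ioi),
        inter_ncard P hPne0 (fun x => 0 < x) _ (fun x => Set.mem_Ioi)]
    exact hca.2
end

section
/- Define a sequence of integers by x_0 = 1, x_1 = 1, and x_{n+1}·x_{n-1} = (2n+1)·x_n^2 if n ≡ 0 (mod 3), x_{n+1}·x_{n-1} = 4·x_n^2 if n ≡ 1 (mod 3), and x_{n+1}·x_{n-1} = −(2n+1)·x_n^2 if n ≡ 2 (mod 3). Then for all n, x_n ≠ 0 and the sign of x_n is −1 if n ≡ 3, 5, 6, 7, 8, 10 (mod 12), and +1 if n ≡ 0, 1, 2, 4, 9, 11 (mod 12). -/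
theorem sign_of_lowest_coefficients (x : ℕ → ℚ)
    (h0 : x 0 = 1) (h1 : x 1 = 1)
    (hrec : ∀ n : ℕ, x (n + 2) * x n =
      (if (n + 1) % 3 = 0 then ((2 * (n + 1) + 1 : ℕ) : ℚ)
       else if (n + 1) % 3 = 1 then 4
       else -((2 * (n + 1) + 1 : ℕ) : ℚ)) * x (n + 1) ^ 2) :
    ∀ n : ℕ, x n ≠ 0 ∧
      ((n % 12 = 3 ∨ n % 12 = 5 ∨ n % 12 = 6 ∨ n % 12 = 7 ∨ n % 12 = 8 ∨ n % 12 = 10) →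
        x n < 0) ∧
      ((n % 12 = 0 ∨ n % 12 = 1 ∨ n % 12 = 2 ∨ n % 12 = 4 ∨ n % 12 = 9 ∨ n % 12 = 11) →
        0 < x n) := by
  set P : ℕ → Prop := fun n => x n ≠ 0 ∧
      ((n % 12 = 3 ∨ n % 12 = 5 ∨ n % 12 = 6 ∨ n % 12 = 7 ∨ n % 12 = 8 ∨ n % 12 = 10) →
        x n < 0) ∧
      ((n % 12 = 0 ∨ n % 12 = 1 ∨ n % 12 = 2 ∨ n % 12 = 4 ∨ n % 12 = 9 ∨ n % 12 = 11) →
        0 < x n) with hP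
  have key : ∀ n, P n ∧ P (n + 1) := by
    intro n
    induction n with
    | zero =>
      constructor
      · exact ⟨by rw [h0]; norm_num, fun h => by omega, fun _ => by rw [h0]; norm_num⟩
      · exact ⟨by rw [h1]; norm_num, fun h => by omega, fun _ => by rw [h1]; norm_num⟩
    | succ k ih =>
      refine ⟨ih.2, ?_⟩
      have hk := ih.1
      have hk1 := ih.2
      have hrk := hrec k
      have hsq : 0 < x (k + 1) ^ 2 := by
        have := hk1.1
        positivity
      have hkc : (0:ℚ) ≤ (k : ℚ) := Nat.cast_nonneg k
      have hcases : k % 12 = 0 ∨ k % 12 = 1 ∨ k % 12 = 2 ∨ k % 12 = 3 ∨ k % 12 = 4 ∨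
          k % 12 = 5 ∨ k % 12 = 6 ∨ k % 12 = 7 ∨ k % 12 = 8 ∨ k % 12 = 9 ∨
          k % 12 = 10 ∨ k % 12 = 11 := by omega
      rcases hcases with hr | hr | hr | hr | hr | hr | hr | hr | hr | hr | hr | hr
      -- k % 12 = 0 : x k > 0, coeff > 0, x(k+2) > 0
      · rw [show (k + 1) % 3 = 1 from by omega] at hrk
        norm_num at hrk
        have hxk : 0 < x k := hk.2.2 (by omega)
        have hs : 0 < x (k + 2) := by nlinarith [hsq, hxk]
        exact ⟨hs.ne', fun h => by omega, fun _ => hs⟩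
      -- k % 12 = 1 : x k > 0, coeff < 0, x(k+2) < 0
      · rw [show (k + 1) % 3 = 2 from by omega] at hrk
        norm_num at hrk
        have hxk : 0 < x k := hk.2.2 (by omega)
        have hs : x (k + 2) < 0 := by nlinarith [hsq, hxk]
        exact ⟨hs.ne, fun _ => hs, fun h => by omega⟩
      -- k % 12 = 2 : x k > 0, coeff > 0, x(k+2) > 0
      · rw [show (k + 1) % 3 = 0 from by omega] at hrk
        norm_num at hrk
        have hxk : 0 < x k := hk.2.2 (by omega)
        have hs : 0 < x (k + 2) := by nlinarith [hsq, hxk]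
        exact ⟨hs.ne', fun h => by omega, fun _ => hs⟩
      -- k % 12 = 3 : x k < 0, coeff > 0, x(k+2) < 0
      · rw [show (k + 1) % 3 = 1 from by omega] at hrk
        norm_num at hrk
        have hxk : x k < 0 := hk.2.1 (by omega)
        have hs : x (k + 2) < 0 := by nlinarith [hsq, hxk]
        exact ⟨hs.ne, fun _ => hs, fun h => by omega⟩
      -- k % 12 = 4 : x k > 0, coeff < 0, x(k+2) < 0
      · rw [show (k + 1) % 3 = 2 from by omega] at hrk
        norm_num at hrk
        have hxk : 0 < x k := hk.2.2 (by omega)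
        have hs : x (k + 2) < 0 := by nlinarith [hsq, hxk]
        exact ⟨hs.ne, fun _ => hs, fun h => by omega⟩
      -- k % 12 = 5 : x k < 0, coeff > 0, x(k+2) < 0
      · rw [show (k + 1) % 3 = 0 from by omega] at hrk
        norm_num at hrk
        have hxk : x k < 0 := hk.2.1 (by omega)
        have hs : x (k + 2) < 0 := by nlinarith [hsq, hxk]
        exact ⟨hs.ne, fun _ => hs, fun h => by omega⟩
      -- k % 12 = 6 : x k < 0, coeff > 0, x(k+2) < 0
      · rw [show (k + 1) % 3 = 1 from by omega] at hrk
        norm_num at hrk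
        have hxk : x k < 0 := hk.2.1 (by omega)
        have hs : x (k + 2) < 0 := by nlinarith [hsq, hxk]
        exact ⟨hs.ne, fun _ => hs, fun h => by omega⟩
      -- k % 12 = 7 : x k < 0, coeff < 0, x(k+2) > 0
      · rw [show (k + 1) % 3 = 2 from by omega] at hrk
        norm_num at hrk
        have hxk : x k < 0 := hk.2.1 (by omega)
        have hs : 0 < x (k + 2) := by nlinarith [hsq, hxk]
        exact ⟨hs.ne', fun h => by omega, fun _ => hs⟩
      -- k % 12 = 8 : x k < 0, coeff > 0, x(k+2) < 0
      · rw [show (k + 1) % 3 = 0 from by omega] at hrk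
        norm_num at hrk
        have hxk : x k < 0 := hk.2.1 (by omega)
        have hs : x (k + 2) < 0 := by nlinarith [hsq, hxk]
        exact ⟨hs.ne, fun _ => hs, fun h => by omega⟩
      -- k % 12 = 9 : x k > 0, coeff > 0, x(k+2) > 0
      · rw [show (k + 1) % 3 = 1 from by omega] at hrk
        norm_num at hrk
        have hxk : 0 < x k := hk.2.2 (by omega)
        have hs : 0 < x (k + 2) := by nlinarith [hsq, hxk]
        exact ⟨hs.ne', fun h => by omega, fun _ => hs⟩
      -- k % 12 = 10 : x k < 0, coeff < 0, x(k+2) > 0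
      · rw [show (k + 1) % 3 = 2 from by omega] at hrk
        norm_num at hrk
        have hxk : x k < 0 := hk.2.1 (by omega)
        have hs : 0 < x (k + 2) := by nlinarith [hsq, hxk]
        exact ⟨hs.ne', fun h => by omega, fun _ => hs⟩
      -- k % 12 = 11 : x k > 0, coeff > 0, x(k+2) > 0
      · rw [show (k + 1) % 3 = 0 from by omega] at hrk
        norm_num at hrk
        have hxk : 0 < x k := hk.2.2 (by omega)
        have hs : 0 < x (k + 2) := by nlinarith [hsq, hxk]
        exact ⟨hs.ne', fun h => by omega, fun _ => hs⟩
  exact fun n => (key n).1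
end

section
/- For every n ∈ ℕ, the number of real roots of the n-th Yablonskii–Vorob'ev polynomial Q_n equals ⌊(n+1)/2⌋. Moreover, for n ≥ 2, min(Z_{n-1}) > min(Z_{n+1}) and max(Z_{n-1}) < max(Z_{n+1}), where Z_m denotes the set of real roots of Q_m. -/
open Polynomial

namespace YV

/-- number of elements of S greater than x -/
noncomputable def N (S : Finset ℝ) (x : ℝ) : ℕ := (S.filter (x < ·)).card

lemma roots_nodup (P : Polynomial ℝ) (hP0 : P ≠ 0)
    (hs : ∀ x, P.eval x = 0 → P.derivative.eval x ≠ 0) : P.roots.Nodup := by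
  rw [Multiset.nodup_iff_count_le_one]
  intro a
  by_contra h
  push_neg at h
  rw [count_roots] at h
  have h2 : (X - C a) ^ 2 ∣ P :=
    (pow_dvd_pow _ (by omega : 2 ≤ rootMultiplicity a P)).trans (P.pow_rootMultiplicity_dvd a)
  obtain ⟨q, rfl⟩ := h2
  have hroot : ((X - C a) ^ 2 * q).eval a = 0 := by simp
  have := hs a hroot
  apply this
  simp [derivative_mul, derivative_pow]

lemma pos_of_no_roots (q : Polynomial ℝ) (hq0 : q ≠ 0) (hr : q.roots = 0)
    (hlc : 0 < q.leadingCoeff) : ∀ x, 0 < q.eval x := by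
  have hne : ∀ x, q.eval x ≠ 0 := by
    intro x hx
    have : x ∈ q.roots := by rw [mem_roots hq0]; exact hx
    simp [hr] at this
  intro x
  rcases Nat.eq_zero_or_pos q.natDegree with h0 | hpos
  · have := Polynomial.eq_C_of_natDegree_eq_zero h0
    rw [this, eval_C]
    rwa [this, leadingCoeff_C] at hlc
  · by_contra hneg
    push_neg at hneg
    have hlt : q.eval x < 0 := lt_of_le_of_ne hneg (hne x)
    have htop : Filter.Tendsto (fun y => q.eval y) Filter.atTop Filter.atTop :=
      q.tendsto_atTop_of_leadingCoeff_nonneg (natDegree_pos_iff_degree_pos.mp hpos) hlc.le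
    obtain ⟨y, hy1, hy2⟩ := ((htop.eventually_ge_atTop 1).and (Filter.eventually_gt_atTop x)).exists
    have hcont : ContinuousOn (fun y => q.eval y) (Set.Icc x y) := q.continuous.continuousOn
    have : (0:ℝ) ∈ Set.Icc (q.eval x) (q.eval y) := ⟨hlt.le, by linarith⟩
    obtain ⟨z, _, hz⟩ := intermediate_value_Icc hy2.le hcont this
    exact hne z hz

lemma even_natDegree_of_pos (q : Polynomial ℝ) (hpos : ∀ x, 0 < q.eval x) :
    Even q.natDegree := by
  by_contra hodd
  have hodd : Odd q.natDegree := Nat.not_even_iff_odd.mp hodd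
  have hpos1 : 0 < q.natDegree := by rcases hodd with ⟨k, hk⟩; omega
  have hdeg : 0 < q.degree := natDegree_pos_iff_degree_pos.mp hpos1
  have hlc : 0 < q.leadingCoeff := by
    rcases lt_trichotomy q.leadingCoeff 0 with h | h | h
    · have hbot := q.tendsto_atBot_of_leadingCoeff_nonpos hdeg h.le
      obtain ⟨y, hy⟩ := (hbot.eventually_le_atBot (-1)).exists
      nlinarith [hpos y]
    · exact absurd (leadingCoeff_eq_zero.mp h) (fun h0 => by simp [h0] at hpos1)
    · exact h
  set r := q.comp (-X) with hr
  have hrdeg : r.natDegree = q.natDegree := by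
    rw [hr, natDegree_comp]; simp
  have hrlc : r.leadingCoeff < 0 := by
    rw [hr, leadingCoeff_comp (by simp)]
    simp only [leadingCoeff_neg, leadingCoeff_X]
    rw [hodd.neg_one_pow]
    nlinarith
  have hrdegpos : 0 < r.degree := natDegree_pos_iff_degree_pos.mp (by omega)
  have hbot := r.tendsto_atBot_of_leadingCoeff_nonpos hrdegpos hrlc.le
  obtain ⟨y, hy⟩ := (hbot.eventually_le_atBot (-1)).exists
  have : r.eval y = q.eval (-y) := by rw [hr, eval_comp]; simp
  nlinarith [hpos (-y)]



lemma prod_sign (R : Finset ℝ) (x : ℝ) (hx : ∀ a ∈ R, a ≠ x) :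
    (∏ a ∈ R, (x - a)) ≠ 0 ∧
    (0 < ∏ a ∈ R, (x - a) ↔ Even ((R.filter (x < ·)).card)) := by
  classical
  have hsplit := Finset.prod_filter_mul_prod_filter_not R (x < ·) (fun a => x - a)
  have h2 : 0 < ∏ a ∈ R.filter (fun a => ¬ x < a), (x - a) := by
    apply Finset.prod_pos
    intro a ha
    rw [Finset.mem_filter] at ha
    have := hx a ha.1
    have : a < x := lt_of_le_of_ne (not_lt.mp ha.2) this
    linarith
  have h1 : ∏ a ∈ R.filter (x < ·), (x - a)
      = (-1 : ℝ) ^ ((R.filter (x < ·)).card) * ∏ a ∈ R.filter (x < ·), (a - x) := by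
    rw [← Finset.prod_const, ← Finset.prod_mul_distrib]
    apply Finset.prod_congr rfl
    intro a _; ring
  have h3 : 0 < ∏ a ∈ R.filter (x < ·), (a - x) := by
    apply Finset.prod_pos
    intro a ha
    rw [Finset.mem_filter] at ha
    linarith [ha.2]
  constructor
  · rw [← hsplit, h1]
    rcases Nat.even_or_odd ((R.filter (x < ·)).card) with he | ho
    · rw [he.neg_one_pow]; nlinarith
    · rw [ho.neg_one_pow]; nlinarith
  · rw [← hsplit, h1]
    constructor
    · intro hpos
      by_contra hodd
      rw [(Nat.not_even_iff_odd.mp hodd).neg_one_pow] at hpos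
      nlinarith
    · intro he
      rw [he.neg_one_pow]
      nlinarith

lemma decomp (P : Polynomial ℝ) (hlc : 0 < P.leadingCoeff)
    (hs : ∀ x, P.eval x = 0 → P.derivative.eval x ≠ 0) :
    (∀ x, P.eval x ≠ 0 → (0 < P.eval x ↔ Even ((P.roots.toFinset.filter (x < ·)).card)))
    ∧ P.roots.toFinset.card % 2 = P.natDegree % 2 := by
  classical
  have hP0 : P ≠ 0 := fun h => by simp [h] at hlc
  have hnd : P.roots.Nodup := roots_nodup P hP0 hs
  obtain ⟨q, hq_eq, hdeg, hroots0⟩ := P.exists_prod_multiset_X_sub_C_mul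
  have hq0 : q ≠ 0 := by rintro rfl; simp at hq_eq; exact hP0 hq_eq.symm
  have hmon : ((P.roots.map fun a => X - C a).prod).Monic :=
    monic_multiset_prod_of_monic _ _ (fun a _ => monic_X_sub_C a)
  have hqlc : 0 < q.leadingCoeff := by
    have := congrArg leadingCoeff hq_eq
    rw [leadingCoeff_mul, hmon.leadingCoeff, one_mul] at this
    rw [this]; exact hlc
  have hqpos : ∀ x, 0 < q.eval x := pos_of_no_roots q hq0 hroots0 hqlc
  have hval : P.roots.toFinset.val = P.roots := by
    simp [Multiset.toFinset_val, Multiset.dedup_eq_self.mpr hnd]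
  have heval : ∀ x, P.eval x = (∏ a ∈ P.roots.toFinset, (x - a)) * q.eval x := by
    intro x
    conv_lhs => rw [← hq_eq]
    rw [eval_mul, eval_multiset_prod]
    congr 1
    rw [Finset.prod_eq_multiset_prod, hval, Multiset.map_map]
    congr 1
    ext a
    simp
  have hcard : P.roots.toFinset.card = Multiset.card P.roots := by
    rw [Finset.card_def, hval]
  constructor
  · intro x hx
    have hxr : ∀ a ∈ P.roots.toFinset, a ≠ x := by
      intro a ha h
      apply hx
      rw [Multiset.mem_toFinset, mem_roots hP0] at ha
      rw [← h]; exact ha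
    obtain ⟨hne, hiff⟩ := prod_sign P.roots.toFinset x hxr
    rw [heval x]
    rw [← hiff]
    constructor
    · intro h
      nlinarith [hqpos x, lt_or_gt_of_ne hne]
      
    · intro h
      exact mul_pos h (hqpos x)
  · have hqeven : Even q.natDegree := even_natDegree_of_pos q hqpos
    rw [hcard]
    rw [Nat.even_iff] at hqeven
    omega


end YV


namespace YV

lemma N_mono (S : Finset ℝ) {x y : ℝ} (h : x ≤ y) : N S y ≤ N S x := by
  apply Finset.card_le_card
  intro a ha
  rw [Finset.mem_filter] at *
  exact ⟨ha.1, lt_of_le_of_lt h ha.2⟩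

lemma card_split (S : Finset ℝ) (x : ℝ) (hx : x ∉ S) :
    S.card = (S.filter (· < x)).card + N S x := by
  classical
  have h1 : S.filter (fun a => ¬ a < x) = S.filter (x < ·) := by
    ext a
    simp only [Finset.mem_filter, not_lt]
    constructor
    · rintro ⟨ha, h⟩
      exact ⟨ha, lt_of_le_of_ne h (by rintro rfl; exact hx ha)⟩
    · rintro ⟨ha, h⟩; exact ⟨ha, h.le⟩
  have h2 := Finset.card_filter_add_card_filter_not (s := S) (p := (· < x))
  rw [h1] at h2
  rw [N]
  omega

lemma card_split_mem (S : Finset ℝ) (x : ℝ) (hx : x ∈ S) :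
    S.card = (S.filter (· < x)).card + 1 + N S x := by
  classical
  have h1 : (S.erase x).card + 1 = S.card := Finset.card_erase_add_one hx
  have h2 := card_split (S.erase x) x (Finset.notMem_erase x S)
  have h3 : (S.erase x).filter (· < x) = S.filter (· < x) := by
    ext a; simp only [Finset.mem_filter, Finset.mem_erase]
    constructor
    · rintro ⟨⟨_, ha⟩, h⟩; exact ⟨ha, h⟩
    · rintro ⟨ha, h⟩; exact ⟨⟨ne_of_lt h, ha⟩, h⟩
  have h4 : N (S.erase x) x = N S x := by
    unfold N
    congr 1
    ext a; simp only [Finset.mem_filter, Finset.mem_erase]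
    constructor
    · rintro ⟨⟨_, ha⟩, h⟩; exact ⟨ha, h⟩
    · rintro ⟨ha, h⟩; exact ⟨⟨(ne_of_lt h).symm, ha⟩, h⟩
  have h3' := congrArg Finset.card h3
  omega

/-- successor: if `b ∈ B` and `N B b = j+1` then there is `b' ∈ B`, `b < b'`,
`N B b' = j`, and `B` has no element in `(b, b')`. -/
lemma succ_exists (B : Finset ℝ) (b : ℝ) (hb : b ∈ B) (j : ℕ) (hj : N B b = j + 1) :
    ∃ b' ∈ B, b < b' ∧ N B b' = j ∧ ∀ y ∈ B, b < y → b' ≤ y := by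
  classical
  have hne : (B.filter (b < ·)).Nonempty := by
    rw [← Finset.card_pos, ← N, hj]; omega
  set b' := (B.filter (b < ·)).min' hne with hb'
  have hmem := (B.filter (b < ·)).min'_mem hne
  rw [Finset.mem_filter] at hmem
  have hmin : ∀ y ∈ B, b < y → b' ≤ y := by
    intro y hy hby
    exact Finset.min'_le _ y (Finset.mem_filter.mpr ⟨hy, hby⟩)
  refine ⟨b', hmem.1, hmem.2, ?_, hmin⟩
  have heq : B.filter (b < ·) = insert b' (B.filter (b' < ·)) := by
    ext y
    simp only [Finset.mem_insert, Finset.mem_filter]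
    constructor
    · rintro ⟨hy, hby⟩
      rcases eq_or_lt_of_le (hmin y hy hby) with h | h
      · exact Or.inl h.symm
      · exact Or.inr ⟨hy, h⟩
    · rintro (rfl | ⟨hy, hy2⟩)
      · exact ⟨hmem.1, hmem.2⟩
      · exact ⟨hy, lt_trans hmem.2 hy2⟩
  have hnotmem : b' ∉ B.filter (b' < ·) := by
    rw [Finset.mem_filter]; rintro ⟨_, h⟩; exact lt_irrefl _ h
  have := congrArg Finset.card heq
  rw [Finset.card_insert_of_notMem hnotmem] at this
  rw [N] at hj ⊢
  omega

/-- predecessor -/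
lemma pred_exists (B : Finset ℝ) (b : ℝ) (hb : b ∈ B) (i : ℕ)
    (hi : (B.filter (· < b)).card = i + 1) :
    ∃ b' ∈ B, b' < b ∧ (B.filter (· < b')).card = i ∧ N B b' = N B b + 1 ∧
      ∀ y ∈ B, y < b → y ≤ b' := by
  classical
  have hne : (B.filter (· < b)).Nonempty := by rw [← Finset.card_pos, hi]; omega
  set b' := (B.filter (· < b)).max' hne with hb'
  have hmem := (B.filter (· < b)).max'_mem hne
  rw [Finset.mem_filter] at hmem
  have hmax : ∀ y ∈ B, y < b → y ≤ b' := by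
    intro y hy hyb
    exact Finset.le_max' (B.filter (· < b)) y (Finset.mem_filter.mpr ⟨hy, hyb⟩)
  refine ⟨b', hmem.1, hmem.2, ?_, ?_, hmax⟩
  · have heq : B.filter (· < b) = insert b' (B.filter (· < b')) := by
      ext y
      simp only [Finset.mem_insert, Finset.mem_filter]
      constructor
      · rintro ⟨hy, hyb⟩
        rcases eq_or_lt_of_le (hmax y hy hyb) with h | h
        · exact Or.inl h
        · exact Or.inr ⟨hy, h⟩
      · rintro (rfl | ⟨hy, hy2⟩)
        · exact ⟨hmem.1, hmem.2⟩
        · exact ⟨hy, lt_trans hy2 hmem.2⟩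
    have hnotmem : b' ∉ B.filter (· < b') := by
      rw [Finset.mem_filter]; rintro ⟨_, h⟩; exact lt_irrefl _ h
    have := congrArg Finset.card heq
    rw [Finset.card_insert_of_notMem hnotmem] at this
    omega
  · have heq : B.filter (b' < ·) = insert b (B.filter (b < ·)) := by
      ext y
      simp only [Finset.mem_insert, Finset.mem_filter]
      constructor
      · rintro ⟨hy, hby⟩
        rcases lt_trichotomy y b with h | h | h
        · exact absurd (hmax y hy h) (not_le.mpr hby)
        · exact Or.inl h
        · exact Or.inr ⟨hy, h⟩
      · rintro (rfl | ⟨hy, hy2⟩)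
        · exact ⟨hb, hmem.2⟩
        · exact ⟨hy, lt_trans hmem.2 hy2⟩
    have hnotmem : b ∉ B.filter (b < ·) := by
      rw [Finset.mem_filter]; rintro ⟨_, h⟩; exact lt_irrefl _ h
    have := congrArg Finset.card heq
    rw [Finset.card_insert_of_notMem hnotmem] at this
    rw [N, N]
    omega

lemma step_lower (B C : Finset ℝ) (δ : ℕ)
    (par : ∀ b ∈ B, N C b % 2 = (N B b + δ) % 2) :
    ∀ b ∈ B, N B b + δ % 2 ≤ N C b := by
  suffices H : ∀ j, ∀ b ∈ B, N B b = j → j + δ % 2 ≤ N C b by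
    intro b hb; exact H (N B b) b hb rfl
  intro j
  induction j with
  | zero =>
    intro b hb h0
    have := par b hb
    rw [h0] at this
    omega
  | succ j ih =>
    intro b hb hj
    obtain ⟨b', hb', hbb', hNb', _⟩ := succ_exists B b hb j hj
    have h1 := ih b' hb' hNb'
    have h2 : N C b' ≤ N C b := N_mono C hbb'.le
    have p1 := par b hb
    have p2 := par b' hb'
    rw [hj] at p1
    rw [hNb'] at p2
    omega

lemma step_upper (B C : Finset ℝ) (δ : ℕ) (hδ : δ ≤ 1) (hBne : B.Nonempty)
    (par : ∀ b ∈ B, N C b % 2 = (N B b + δ) % 2)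
    (hmin : N C (B.min' hBne) = N B (B.min' hBne) + δ) :
    ∀ b ∈ B, N C b = N B b + δ := by
  have hlow := step_lower B C δ par
  suffices H : ∀ i, ∀ b ∈ B, (B.filter (· < b)).card = i → N C b ≤ N B b + δ by
    intro b hb
    have := hlow b hb
    have := H _ b hb rfl
    omega
  intro i
  induction i with
  | zero =>
    intro b hb h0
    have hbmin : b = B.min' hBne := by
      have h1 := B.min'_mem hBne
      have h2 := B.min'_le b hb
      rcases eq_or_lt_of_le h2 with h | h
      · exact h.symm
      · exfalso
        have : B.min' hBne ∈ B.filter (· < b) := Finset.mem_filter.mpr ⟨h1, h⟩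
        rw [Finset.card_eq_zero.mp h0] at this
        simp at this
    rw [hbmin, hmin]
  | succ i ih =>
    intro b hb hi
    obtain ⟨b', hb', hb'b, hcard', hN', _⟩ := pred_exists B b hb i hi
    have h1 := ih b' hb' hcard'
    have h2 : N C b ≤ N C b' := N_mono C hb'b.le
    have p1 := par b hb
    have p2 := par b' hb'
    omega

/-- between two elements of C there is an element of A (strictly) -/
def Btw (A C : Finset ℝ) : Prop := ∀ c ∈ C, ∀ c' ∈ C, c < c' → ∃ a ∈ A, c < a ∧ a < c'

lemma card_le_of_btw : ∀ (C A : Finset ℝ), Btw A C → C.card ≤ A.card + 1 := by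
  classical
  intro C
  induction C using Finset.strongInduction with
  | _ C ih =>
    intro A hbtw
    rcases le_or_gt C.card 1 with h | h
    · omega
    · have hne : C.Nonempty := by rw [← Finset.card_pos]; omega
      set c := C.min' hne with hc
      have hcmem := C.min'_mem hne
      set C' := C.erase c with hC'
      have hC'card : C'.card = C.card - 1 := Finset.card_erase_of_mem hcmem
      have hC'ne : C'.Nonempty := by rw [← Finset.card_pos]; omega
      set c' := C'.min' hC'ne with hc'
      have hc'memC' := C'.min'_mem hC'ne
      have hc'mem : c' ∈ C := Finset.mem_of_mem_erase hc'memC'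
      have hcc' : c < c' := by
        rcases eq_or_lt_of_le (C.min'_le c' hc'mem) with h | h
        · exfalso; exact (Finset.ne_of_mem_erase hc'memC') h.symm
        · exact h
      obtain ⟨a, ha, hca, hac'⟩ := hbtw c hcmem c' hc'mem hcc'
      have hsub : C' ⊂ C := Finset.erase_ssubset hcmem
      have hbtw' : Btw (A.filter (a < ·)) C' := by
        intro c₁ h₁ c₂ h₂ h₁₂
        obtain ⟨a'', ha'', h1, h2⟩ := hbtw c₁ (Finset.mem_of_mem_erase h₁) c₂ (Finset.mem_of_mem_erase h₂) h₁₂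
        refine ⟨a'', Finset.mem_filter.mpr ⟨ha'', ?_⟩, h1, h2⟩
        calc a < c' := hac'
        _ ≤ c₁ := C'.min'_le c₁ h₁
        _ < a'' := h1
      have := ih C' hsub (A.filter (a < ·)) hbtw'
      have hAcard : (A.filter (a < ·)).card + 1 ≤ A.card := by
        have : A.filter (a < ·) ⊆ A.erase a := by
          intro y hy
          rw [Finset.mem_filter] at hy
          exact Finset.mem_erase.mpr ⟨(ne_of_lt hy.2).symm, hy.1⟩
        have h5 := Finset.card_le_card this
        have h6 := Finset.card_erase_of_mem ha
        have h7 := Finset.card_pos.mpr ⟨a, ha⟩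
        omega
      omega

lemma chain (A C : Finset ℝ) (hcard : C.card = A.card + 1) (hbtw : Btw A C) :
    ∀ a ∈ A, N A a + 1 ≤ N C a := by
  classical
  suffices H : ∀ i, ∀ a ∈ A, (A.filter (· < a)).card = i → N A a + 1 ≤ N C a by
    intro a ha; exact H _ a ha rfl
  intro i
  induction i with
  | zero =>
    intro a ha h0
    -- a is the minimum of A
    have hCcard : 2 ≤ C.card := by
      have : 0 < A.card := Finset.card_pos.mpr ⟨a, ha⟩
      omega
    have hCne : C.Nonempty := by rw [← Finset.card_pos]; omega
    set c := C.min' hCne with hc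
    have hcmem := C.min'_mem hCne
    set C' := C.erase c with hC'
    have hC'card : C'.card = C.card - 1 := Finset.card_erase_of_mem hcmem
    have hC'ne : C'.Nonempty := by rw [← Finset.card_pos]; omega
    set c₂ := C'.min' hC'ne with hc₂
    have hc₂memC' := C'.min'_mem hC'ne
    have hc₂mem : c₂ ∈ C := Finset.mem_of_mem_erase hc₂memC'
    have hcc₂ : c < c₂ := by
      rcases eq_or_lt_of_le (C.min'_le c₂ hc₂mem) with h | h
      · exact absurd h.symm (Finset.ne_of_mem_erase hc₂memC')
      · exact h
    obtain ⟨a', ha', h1, h2⟩ := hbtw c hcmem c₂ hc₂mem hcc₂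
    have haa' : a ≤ a' := by
      by_contra hlt
      push_neg at hlt
      have : a' ∈ A.filter (· < a) := Finset.mem_filter.mpr ⟨ha', hlt⟩
      rw [Finset.card_eq_zero.mp h0] at this
      simp at this
    -- every element of C' is > a
    have hsub : C' ⊆ C.filter (a < ·) := by
      intro y hy
      refine Finset.mem_filter.mpr ⟨Finset.mem_of_mem_erase hy, ?_⟩
      calc a ≤ a' := haa'
      _ < c₂ := h2
      _ ≤ y := C'.min'_le y hy
    have h3 : C.card - 1 ≤ N C a := by
      rw [N]
      have := Finset.card_le_card hsub
      omega
    have h4 : N A a ≤ A.card - 1 := by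
      have := card_split_mem A a ha
      omega
    omega
  | succ i ih =>
    intro a ha hi
    obtain ⟨a', ha', ha'a, hcard', hN', hmax⟩ := pred_exists A a ha i hi
    have h1 := ih a' ha' hcard'
    -- at most one element of C in (a', a]
    have hone : (C.filter (fun y => a' < y ∧ y ≤ a)).card ≤ 1 := by
      by_contra hgt
      push_neg at hgt
      obtain ⟨c₁, hc₁, c₂, hc₂, hne⟩ := Finset.one_lt_card.mp hgt
      rw [Finset.mem_filter] at hc₁ hc₂
      rcases hne.lt_or_gt with hlt | hlt
      · obtain ⟨a'', ha'', hh1, hh2⟩ := hbtw c₁ hc₁.1 c₂ hc₂.1 hlt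
        have : a'' < a := lt_of_lt_of_le hh2 hc₂.2.2
        have := hmax a'' ha'' this
        have : a' < a'' := lt_trans hc₁.2.1 hh1
        linarith
      · obtain ⟨a'', ha'', hh1, hh2⟩ := hbtw c₂ hc₂.1 c₁ hc₁.1 hlt
        have : a'' < a := lt_of_lt_of_le hh2 hc₁.2.2
        have := hmax a'' ha'' this
        have : a' < a'' := lt_trans hc₂.2.1 hh1
        linarith
    -- N C a' ≤ (C.filter (a' < · ∧ · ≤ a)).card + N C a
    have hsplit : N C a' ≤ (C.filter (fun y => a' < y ∧ y ≤ a)).card + N C a := by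
      rw [N, N]
      have : C.filter (a' < ·) ⊆ (C.filter (fun y => a' < y ∧ y ≤ a)) ∪ (C.filter (a < ·)) := by
        intro y hy
        rw [Finset.mem_filter] at hy
        rw [Finset.mem_union, Finset.mem_filter, Finset.mem_filter]
        rcases le_or_gt y a with h | h
        · exact Or.inl ⟨hy.1, hy.2, h⟩
        · exact Or.inr ⟨hy.1, h⟩
      calc (C.filter (a' < ·)).card ≤ _ := Finset.card_le_card this
      _ ≤ _ := Finset.card_union_le _ _
    omega

end YV

namespace YV2
open YV

lemma N_neg (S : Finset ℝ) (x : ℝ) :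
    N (S.image (fun y => -y)) (-x) = (S.filter (· < x)).card := by
  classical
  rw [N, Finset.filter_image]
  rw [Finset.card_image_of_injective _ (by intro a b h; simpa using h : Function.Injective (fun y : ℝ => -y))]
  congr 1
  apply Finset.filter_congr
  intro a _
  constructor
  · intro h; simpa using h
  · intro h; simpa using h

lemma chain_neg (A C : Finset ℝ) (hcard : C.card = A.card + 1) (hbtw : Btw A C) :
    ∀ a ∈ A, (A.filter (· < a)).card + 1 ≤ (C.filter (· < a)).card := by
  classical
  intro a ha
  set A' := A.image (fun y => -y) with hA'
  set C' := C.image (fun y => -y) with hC'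
  have hinj : Function.Injective (fun y : ℝ => -y) := by intro u v h; simpa using h
  have hcard' : C'.card = A'.card + 1 := by
    rw [hA', hC', Finset.card_image_of_injective _ hinj, Finset.card_image_of_injective _ hinj]
    exact hcard
  have hbtw' : Btw A' C' := by
    intro c hc c₂ hc₂ hlt
    rw [hC', Finset.mem_image] at hc hc₂
    obtain ⟨u, hu, rfl⟩ := hc
    obtain ⟨v, hv, rfl⟩ := hc₂
    have : v < u := by linarith [hlt]
    obtain ⟨w, hw, h1, h2⟩ := hbtw v hv u hu this
    refine ⟨-w, Finset.mem_image_of_mem _ hw, by linarith, by linarith⟩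
  have ha' : -a ∈ A' := Finset.mem_image_of_mem _ ha
  have := chain A' C' hcard' hbtw' (-a) ha'
  rwa [N_neg, N_neg] at this

end YV2


namespace YVD

lemma deg_parity (n : ℕ) : ((n+2)*(n+3)/2) % 2 = ((n+1)/2 + 1) % 2 := by
  rcases Nat.even_or_odd n with ⟨m, rfl⟩ | ⟨m, rfl⟩
  · have h1 : (m + m + 2) * (m + m + 3) = 2 * ((m+1) * (2*m+3)) := by ring
    rw [h1, Nat.mul_div_cancel_left _ (by norm_num)]
    have h2 : (2*m+3) % 2 = 1 := by omega
    rw [Nat.mul_mod, h2, mul_one, Nat.mod_mod_of_dvd _ (dvd_refl 2)]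
    omega
  · have h1 : (2*m + 1 + 2) * (2*m + 1 + 3) = 2 * ((2*m+3) * (m+2)) := by ring
    rw [h1, Nat.mul_div_cancel_left _ (by norm_num)]
    have h2 : (2*m+3) % 2 = 1 := by omega
    rw [Nat.mul_mod, h2, one_mul, Nat.mod_mod_of_dvd _ (dvd_refl 2)]
    omega

end YVD

section Main
open Polynomial Finset YV YV2 YVD

/-- root finset of a polynomial -/
noncomputable def Zf (Q : ℕ → Polynomial ℝ) (j : ℕ) : Finset ℝ := (Q j).roots.toFinset

theorem number_of_real_roots_yablonskii_vorobev (Q : ℕ → Polynomial ℝ)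
    (hQ0 : Q 0 = 1) (hQ1 : Q 1 = X)
    (hrec : ∀ n, Q (n + 2) * Q n =
      X * (Q (n + 1)) ^ 2 -
        4 * (Q (n + 1) * derivative (derivative (Q (n + 1))) - (derivative (Q (n + 1))) ^ 2))
    (hmonic : ∀ n, (Q n).Monic ∧ (Q n).natDegree = n * (n + 1) / 2)
    (hsimple : ∀ n, ∀ x : ℝ, (Q n).eval x = 0 → (derivative (Q n)).eval x ≠ 0)
    (hnocommon1 : ∀ n, ∀ x : ℝ, ¬((Q n).eval x = 0 ∧ (Q (n + 1)).eval x = 0))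
    (hnocommon2 : ∀ n, ∀ x : ℝ, ¬((Q n).eval x = 0 ∧ (Q (n + 2)).eval x = 0))
    (hinter1 : ∀ n, ∀ a ∈ realRoots (Q n), ∀ b ∈ realRoots (Q n), a < b →
      ∃ c ∈ realRoots (Q (n + 2)), a < c ∧ c < b)
    (hinter2 : ∀ n, ∀ a ∈ realRoots (Q (n + 2)), ∀ b ∈ realRoots (Q (n + 2)), a < b →
      ∃ c ∈ realRoots (Q n), a < c ∧ c < b)
    : (∀ n : ℕ, (realRoots (Q n)).ncard = (n + 1) / 2) ∧
      (∀ n : ℕ, 2 ≤ n →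
        sInf (realRoots (Q (n - 1))) > sInf (realRoots (Q (n + 1))) ∧
        sSup (realRoots (Q (n - 1))) < sSup (realRoots (Q (n + 1)))) := by
  classical
  have hQne : ∀ j, Q j ≠ 0 := fun j => (hmonic j).1.ne_zero
  have hlc : ∀ j, 0 < (Q j).leadingCoeff := by
    intro j; rw [(hmonic j).1.leadingCoeff]; norm_num
  have hmemZ : ∀ j x, x ∈ Zf Q j ↔ (Q j).eval x = 0 := by
    intro j x
    rw [Zf, Multiset.mem_toFinset, mem_roots (hQne j)]
    rfl
  have hsets : ∀ j, realRoots (Q j) = ↑(Zf Q j) := by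
    intro j
    ext x
    rw [Finset.mem_coe, hmemZ]
    rfl
  have hsign : ∀ j, ∀ x, (Q j).eval x ≠ 0 →
      (0 < (Q j).eval x ↔ Even (N (Zf Q j) x)) :=
    fun j => (decomp (Q j) (hlc j) (hsimple j)).1
  have hparity : ∀ j, (Zf Q j).card % 2 = (Q j).natDegree % 2 :=
    fun j => (decomp (Q j) (hlc j) (hsimple j)).2
  -- product positivity at roots of middle polynomial
  have hprod : ∀ n, ∀ b : ℝ, (Q (n+1)).eval b = 0 →
      0 < (Q n).eval b * (Q (n+2)).eval b := by
    intro n b hb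
    have h := congrArg (fun p => Polynomial.eval b p) (hrec n)
    simp only [eval_mul, eval_sub, eval_pow, eval_X, eval_ofNat] at h
    rw [hb] at h
    have hd := hsimple (n+1) b hb
    have he : 0 < (derivative (Q (n+1))).eval b ^ 2 := sq_pos_of_ne_zero hd
    nlinarith [h, he]
  -- consequences at roots of Q (n+1)
  have hfb : ∀ n, ∀ b : ℝ, (Q (n+1)).eval b = 0 →
      (Q n).eval b ≠ 0 ∧ (Q (n+2)).eval b ≠ 0 ∧
      (N (Zf Q n) b % 2 = N (Zf Q (n+2)) b % 2) := by
    intro n b hb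
    have hp := hprod n b hb
    have hf : (Q n).eval b ≠ 0 := by intro h; rw [h] at hp; simp at hp
    have hg : (Q (n+2)).eval b ≠ 0 := by intro h; rw [h] at hp; simp at hp
    refine ⟨hf, hg, ?_⟩
    have h1 := hsign n b hf
    have h2 := hsign (n+2) b hg
    rcases lt_or_gt_of_ne hf with hneg | hpos
    · have hgneg : (Q (n+2)).eval b < 0 := by nlinarith
      have e1 : ¬ Even (N (Zf Q n) b) := fun h => by have := h1.mpr h; linarith
      have e2 : ¬ Even (N (Zf Q (n+2)) b) := fun h => by have := h2.mpr h; linarith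
      rw [Nat.not_even_iff] at e1 e2
      omega
    · have hgpos : 0 < (Q (n+2)).eval b := by nlinarith
      have e1 : Even (N (Zf Q n) b) := h1.mp hpos
      have e2 : Even (N (Zf Q (n+2)) b) := h2.mp hgpos
      rw [Nat.even_iff] at e1 e2
      omega
  have hbtwAC : ∀ n, Btw (Zf Q n) (Zf Q (n+2)) := by
    intro n c hc c' hc' hlt
    obtain ⟨a, ha, h1, h2⟩ := hinter2 n c (by rw [hsets]; exact hc) c' (by rw [hsets]; exact hc') hlt
    exact ⟨a, by rw [← Finset.mem_coe, ← hsets]; exact ha, h1, h2⟩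
  -- the main induction
  have main : ∀ n : ℕ, (Zf Q n).card = (n+1)/2 ∧ (Zf Q (n+1)).card = (n+2)/2 ∧
      (∀ b ∈ Zf Q (n+1), N (Zf Q n) b = N (Zf Q (n+1)) b + n % 2) := by
    intro n
    induction n with
    | zero =>
      have hz0 : Zf Q 0 = ∅ := by
        rw [Zf, hQ0]
        simp
      have hz1 : Zf Q 1 = {0} := by
        rw [Zf, hQ1, roots_X]
        rfl
      refine ⟨by rw [hz0]; rfl, by rw [hz1]; rfl, ?_⟩
      intro b hb
      rw [hz1, Finset.mem_singleton] at hb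
      subst hb
      rw [hz0, hz1]
      simp [N, Finset.filter_singleton]
    | succ n ih =>
      obtain ⟨h1, h2, h3⟩ := ih
      set A := Zf Q n with hA
      set B := Zf Q (n+1) with hB
      set C := Zf Q (n+2) with hC
      set δ := n % 2 with hδ
      have hBne : B.Nonempty := by
        rw [← Finset.card_pos, h2]; omega
      set b₀ := B.min' hBne with hb₀
      have hb₀mem : b₀ ∈ B := B.min'_mem hBne
      have hb₀root : (Q (n+1)).eval b₀ = 0 := (hmemZ (n+1) b₀).mp hb₀mem
      have par : ∀ b ∈ B, N C b % 2 = (N B b + δ) % 2 := by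
        intro b hb
        have hroot : (Q (n+1)).eval b = 0 := (hmemZ (n+1) b).mp hb
        have hfb' := (hfb n b hroot).2.2
        rw [← hA, ← hC] at hfb'
        have h3b := h3 b hb
        omega
      have hnotC : ∀ b ∈ B, b ∉ C := by
        intro b hb hbC
        exact (hfb n b ((hmemZ (n+1) b).mp hb)).2.1 ((hmemZ (n+2) b).mp hbC)
      have hlow := step_lower B C δ par
      have hcardC2 : C.card % 2 = ((n+1)/2 + 1) % 2 := by
        have hp := hparity (n+2)
        have hd := (hmonic (n+2)).2
        have := deg_parity n
        rw [hd, ← hC] at hp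
        have he3 : n + 2 + 1 = n + 3 := by omega
        rw [he3] at hp
        omega
      have hfiltb₀ : (B.filter (· < b₀)).card = 0 := by
        rw [Finset.card_eq_zero, Finset.filter_eq_empty_iff]
        intro y hy
        exact not_lt.mpr (B.min'_le y hy)
      have hNBb₀ : N B b₀ = B.card - 1 := by
        have := card_split_mem B b₀ hb₀mem
        omega
      have hsplitC := card_split C b₀ (hnotC b₀ hb₀mem)
      have hlowb₀ := hlow b₀ hb₀mem
      have hparb₀ := par b₀ hb₀mem
      have hupperC : C.card ≤ A.card + 1 := card_le_of_btw C A (hbtwAC n)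
      -- pinch
      have hδle : δ ≤ 1 := by omega
      have hcardC : C.card = (n+1)/2 + 1 ∧ (C.filter (· < b₀)).card = 1 ∧
          N C b₀ = N B b₀ + δ := by
        have hk : A.card = (n+1)/2 := h1
        have hm : B.card = (n+2)/2 := h2
        omega
      obtain ⟨hCcard, hell, hNCb₀⟩ := hcardC
      have hupper := step_upper B C δ hδle hBne par (by rw [← hb₀]; exact hNCb₀)
      refine ⟨h2, by rw [hCcard]; omega, ?_⟩
      -- the interlacing condition at level n+1
      intro c hc
      have hcroot : (Q (n+2)).eval c = 0 := (hmemZ (n+2) c).mp hc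
      have hcB : c ∉ B := by
        intro hcB
        exact hnocommon1 (n+1) c ⟨(hmemZ (n+1) c).mp hcB, hcroot⟩
      have hcb₀ : c ≠ b₀ := fun h => hcB (h ▸ hb₀mem)
      rcases lt_or_gt_of_ne hcb₀ with hlt | hgt
      · -- c < b₀ : c is the unique element of C below b₀
        obtain ⟨x, hx⟩ := Finset.card_eq_one.mp hell
        have hcx : c = x := by
          have : c ∈ C.filter (· < b₀) := Finset.mem_filter.mpr ⟨hc, hlt⟩
          rw [hx, Finset.mem_singleton] at this
          exact this
        have hNCc : N C c = C.card - 1 := by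
          have herase : C.filter (c < ·) = C.erase c := by
            ext y
            rw [Finset.mem_filter, Finset.mem_erase]
            constructor
            · rintro ⟨hy, hcy⟩; exact ⟨(ne_of_lt hcy).symm, hy⟩
            · rintro ⟨hne, hy⟩
              refine ⟨hy, ?_⟩
              by_contra hyc
              push_neg at hyc
              rcases lt_trichotomy y b₀ with h | h | h
              · have : y ∈ C.filter (· < b₀) := Finset.mem_filter.mpr ⟨hy, h⟩
                rw [hx, Finset.mem_singleton] at this
                rw [this] at hne
                exact hne hcx.symm
              · exact hnotC b₀ hb₀mem (h ▸ hy)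
              · linarith
          rw [N, herase, Finset.card_erase_of_mem hc]
        have hNBc : N B c = B.card := by
          rw [N]
          congr 1
          rw [Finset.filter_eq_self]
          intro y hy
          calc c < b₀ := hlt
          _ ≤ y := B.min'_le y hy
        rw [hNBc, hNCc, hCcard, h2]
        omega
      · -- b₀ < c
        have hBfne : (B.filter (· < c)).Nonempty := ⟨b₀, Finset.mem_filter.mpr ⟨hb₀mem, hgt⟩⟩
        set bs := (B.filter (· < c)).max' hBfne with hbs
        have hbsmem' := (B.filter (· < c)).max'_mem hBfne
        rw [Finset.mem_filter] at hbsmem'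
        obtain ⟨hbsB, hbsc⟩ := hbsmem'
        have hmaxb : ∀ y ∈ B, y < c → y ≤ bs := by
          intro y hy hyc
          exact Finset.le_max' (B.filter (· < c)) y (Finset.mem_filter.mpr ⟨hy, hyc⟩)
        have hBgap : ∀ y ∈ B, bs < y → c < y := by
          intro y hy hbsy
          rcases lt_trichotomy y c with h | h | h
          · exact absurd (hmaxb y hy h) (not_le.mpr hbsy)
          · exact absurd (h ▸ hy) hcB
          · exact h
        have hNBeq : N B c = N B bs := by
          rw [N, N]
          congr 1
          ext y
          rw [Finset.mem_filter, Finset.mem_filter]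
          exact ⟨fun ⟨hy, h⟩ => ⟨hy, lt_trans hbsc h⟩, fun ⟨hy, h⟩ => ⟨hy, hBgap y hy h⟩⟩
        -- exactly one element of C in (bs, c]
        have hone : (C.filter (fun y => bs < y ∧ y ≤ c)).card = 1 := by
          have hmemc : c ∈ C.filter (fun y => bs < y ∧ y ≤ c) :=
            Finset.mem_filter.mpr ⟨hc, hbsc, le_refl c⟩
          have hle : (C.filter (fun y => bs < y ∧ y ≤ c)).card ≤ 1 := by
            by_contra hgt2
            push_neg at hgt2
            obtain ⟨c₁, hc₁, c₂, hc₂, hne12⟩ := Finset.one_lt_card.mp hgt2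
            rw [Finset.mem_filter] at hc₁ hc₂
            rcases Finset.eq_empty_or_nonempty (B.filter (bs < ·)) with hemp | hne'
            · -- bs is the max of B; then N C bs = δ ≤ 1 but ≥ 2
              have hNBbs : N B bs = 0 := by rw [N, hemp]; rfl
              have := hupper bs hbsB
              rw [hNBbs] at this
              have h2card : 2 ≤ N C bs := by
                rw [N]
                have hsub : {c₁, c₂} ⊆ C.filter (bs < ·) := by
                  intro y hy
                  rw [Finset.mem_insert, Finset.mem_singleton] at hy
                  rcases hy with rfl | rfl
                  · exact Finset.mem_filter.mpr ⟨hc₁.1, hc₁.2.1⟩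
                  · exact Finset.mem_filter.mpr ⟨hc₂.1, hc₂.2.1⟩
                have := Finset.card_le_card hsub
                rw [Finset.card_insert_of_notMem (by simpa using hne12), Finset.card_singleton] at this
                omega
              omega
            · set bp := (B.filter (bs < ·)).min' hne' with hbp
              have hbpmem' := (B.filter (bs < ·)).min'_mem hne'
              rw [Finset.mem_filter] at hbpmem'
              obtain ⟨hbpB, hbsbp⟩ := hbpmem'
              have hcbp : c < bp := hBgap bp hbpB hbsbp
              have hminbp : ∀ y ∈ B, bs < y → bp ≤ y := by
                intro y hy h
                exact Finset.min'_le _ y (Finset.mem_filter.mpr ⟨hy, h⟩)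
              -- N B bs = N B bp + 1
              have hNB1 : N B bs = N B bp + 1 := by
                have heq : B.filter (bs < ·) = insert bp (B.filter (bp < ·)) := by
                  ext y
                  simp only [Finset.mem_insert, Finset.mem_filter]
                  constructor
                  · rintro ⟨hy, h⟩
                    rcases eq_or_lt_of_le (hminbp y hy h) with h' | h'
                    · exact Or.inl h'.symm
                    · exact Or.inr ⟨hy, h'⟩
                  · rintro (rfl | ⟨hy, h⟩)
                    · exact ⟨hbpB, hbsbp⟩
                    · exact ⟨hy, lt_trans hbsbp h⟩
                have hnm : bp ∉ B.filter (bp < ·) := by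
                  rw [Finset.mem_filter]; rintro ⟨_, h⟩; exact lt_irrefl _ h
                rw [N, N, heq, Finset.card_insert_of_notMem hnm]
              have hu1 := hupper bs hbsB
              have hu2 := hupper bp hbpB
              -- but C has ≥ 2 + N C bp elements above bs
              have hsub : insert c₁ (insert c₂ (C.filter (bp < ·))) ⊆ C.filter (bs < ·) := by
                intro y hy
                simp only [Finset.mem_insert] at hy
                rcases hy with rfl | rfl | hy
                · exact Finset.mem_filter.mpr ⟨hc₁.1, hc₁.2.1⟩
                · exact Finset.mem_filter.mpr ⟨hc₂.1, hc₂.2.1⟩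
                · rw [Finset.mem_filter] at hy ⊢
                  exact ⟨hy.1, lt_trans hbsbp hy.2⟩
              have hnm1 : c₂ ∉ C.filter (bp < ·) := by
                rw [Finset.mem_filter]
                rintro ⟨_, h⟩
                linarith [hc₂.2.2]
              have hnm2 : c₁ ∉ insert c₂ (C.filter (bp < ·)) := by
                rw [Finset.mem_insert]
                rintro (rfl | h)
                · exact hne12 rfl
                · rw [Finset.mem_filter] at h
                  linarith [hc₁.2.2]
              have hcards := Finset.card_le_card hsub
              rw [Finset.card_insert_of_notMem hnm2, Finset.card_insert_of_notMem hnm1] at hcards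
              rw [N] at hu1 hu2
              omega
          have hpos1 := Finset.card_pos.mpr ⟨c, hmemc⟩
          omega
        -- split N C bs = 1 + N C c
        have hsplit2 : N C bs = 1 + N C c := by
          have hdisj : Disjoint (C.filter (fun y => bs < y ∧ y ≤ c)) (C.filter (c < ·)) := by
            rw [Finset.disjoint_filter]
            rintro y _ ⟨_, h1⟩ h2
            linarith
          have hun : C.filter (bs < ·) = (C.filter (fun y => bs < y ∧ y ≤ c)) ∪ (C.filter (c < ·)) := by
            ext y
            simp only [Finset.mem_union, Finset.mem_filter]
            constructor
            · rintro ⟨hy, h⟩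
              rcases le_or_gt y c with h' | h'
              · exact Or.inl ⟨hy, h, h'⟩
              · exact Or.inr ⟨hy, h'⟩
            · rintro (⟨hy, h, _⟩ | ⟨hy, h⟩)
              · exact ⟨hy, h⟩
              · exact ⟨hy, lt_trans (lt_of_lt_of_le hbsc (le_refl c)) h⟩
          rw [N, hun, Finset.card_union_of_disjoint hdisj, hone, N]
        have hu := hupper bs hbsB
        rw [hNBeq]
        omega
  -- conclusion
  constructor
  · intro n
    rw [hsets n, Set.ncard_coe_finset]
    exact (main n).1
  · intro n hn
    have hA : (Zf Q (n-1)).card = n / 2 := by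
      have := (main (n-1)).1
      have he : n - 1 + 1 = n := by omega
      rwa [he] at this
    have hC : (Zf Q (n+1)).card = (n+2) / 2 := (main (n+1)).1
    have hcard : (Zf Q (n+1)).card = (Zf Q (n-1)).card + 1 := by omega
    have hbtw : Btw (Zf Q (n-1)) (Zf Q (n+1)) := by
      have := hbtwAC (n-1)
      have he : n - 1 + 2 = n + 1 := by omega
      rwa [he] at this
    have hAne : (Zf Q (n-1)).Nonempty := by
      rw [← Finset.card_pos, hA]; omega
    have hCne : (Zf Q (n+1)).Nonempty := by
      rw [← Finset.card_pos, hC]; omega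
    constructor
    · -- sInf comparison
      set a₀ := (Zf Q (n-1)).min' hAne with ha₀
      have ha₀mem := (Zf Q (n-1)).min'_mem hAne
      have := chain_neg (Zf Q (n-1)) (Zf Q (n+1)) hcard hbtw a₀ ha₀mem
      have hpos : 0 < ((Zf Q (n+1)).filter (· < a₀)).card := by omega
      rw [Finset.card_pos] at hpos
      obtain ⟨c, hcmem⟩ := hpos
      rw [Finset.mem_filter] at hcmem
      rw [hsets (n-1), hsets (n+1)]
      have h5 : sInf ((Zf Q (n+1) : Finset ℝ) : Set ℝ) ≤ c :=
        csInf_le (Set.Finite.bddBelow (Zf Q (n+1)).finite_toSet) (by exact hcmem.1)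
      have h6 : a₀ ≤ sInf ((Zf Q (n-1) : Finset ℝ) : Set ℝ) := by
        apply le_csInf
        · exact ⟨a₀, ha₀mem⟩
        · intro y hy
          exact (Zf Q (n-1)).min'_le y hy
      calc sInf ((Zf Q (n+1) : Finset ℝ) : Set ℝ) ≤ c := h5
      _ < a₀ := hcmem.2
      _ ≤ _ := h6
    · -- sSup comparison
      set a₁ := (Zf Q (n-1)).max' hAne with ha₁
      have ha₁mem := (Zf Q (n-1)).max'_mem hAne
      have := chain (Zf Q (n-1)) (Zf Q (n+1)) hcard hbtw a₁ ha₁mem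
      have hpos : 0 < N (Zf Q (n+1)) a₁ := by omega
      rw [N, Finset.card_pos] at hpos
      obtain ⟨c, hcmem⟩ := hpos
      rw [Finset.mem_filter] at hcmem
      rw [hsets (n-1), hsets (n+1)]
      have h5 : c ≤ sSup ((Zf Q (n+1) : Finset ℝ) : Set ℝ) :=
        le_csSup (Set.Finite.bddAbove (Zf Q (n+1)).finite_toSet) (by exact hcmem.1)
      have h6 : sSup ((Zf Q (n-1) : Finset ℝ) : Set ℝ) ≤ a₁ := by
        apply csSup_le
        · exact ⟨a₁, ha₁mem⟩
        · intro y hy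
          exact (Zf Q (n-1)).le_max' y hy
      calc sSup ((Zf Q (n-1) : Finset ℝ) : Set ℝ) ≤ a₁ := h6
      _ < c := hcmem.2
      _ ≤ _ := h5

end Main
end

section
/- For every n ∈ ℕ, the number of negative real roots of the n-th Yablonskii–Vorob'ev polynomial Q_n equals ⌊(n+1)/3⌋. -/
open Polynomial

section YVAux
open Set

lemma masterDown (D T : Set ℝ) (hT : T.Finite) (t : ℝ)
    (hD : D ⊆ Iic t)
    (hne : ∀ s ∈ D, (T ∩ Iio s).Nonempty)
    (hbet : ∀ s ∈ D, ∀ s' ∈ D, s < s' → ∃ u ∈ T, s < u ∧ u < s') :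
    D.ncard ≤ (T ∩ Iio t).ncard := by
  have hmem : ∀ s ∈ D, sSup (T ∩ Iio s) ∈ T ∩ Iio s := fun s hs =>
    (hne s hs).csSup_mem (hT.inter_of_left _)
  have hf : ∀ s ∈ D, sSup (T ∩ Iio s) ∈ T ∩ Iio t := by
    intro s hs
    exact ⟨(hmem s hs).1, show sSup (T ∩ Iio s) < t from
      lt_of_lt_of_le (hmem s hs).2 (hD hs)⟩
  have key : ∀ s ∈ D, ∀ s' ∈ D, s < s' → sSup (T ∩ Iio s) < sSup (T ∩ Iio s') := by
    intro s hs s' hs' hlt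
    obtain ⟨u, huT, h1, h2⟩ := hbet s hs s' hs' hlt
    have h3 : u ≤ sSup (T ∩ Iio s') :=
      le_csSup ((hT.inter_of_left _).bddAbove) ⟨huT, h2⟩
    exact lt_of_lt_of_le (lt_trans (hmem s hs).2 h1) h3
  have hinj : Set.InjOn (fun s => sSup (T ∩ Iio s)) D := by
    intro a ha b hb hab
    rcases lt_trichotomy a b with h | h | h
    · exact absurd hab (ne_of_lt (key a ha b hb h))
    · exact h
    · exact absurd hab.symm (ne_of_lt (key b hb a ha h))
  exact Set.ncard_le_ncard_of_injOn _ hf hinj (hT.inter_of_left _)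

lemma masterUp (D T : Set ℝ) (hT : T.Finite) (t : ℝ)
    (hD : D ⊆ Ici t)
    (hne : ∀ s ∈ D, (T ∩ Ioi s).Nonempty)
    (hbet : ∀ s ∈ D, ∀ s' ∈ D, s < s' → ∃ u ∈ T, s < u ∧ u < s') :
    D.ncard ≤ (T ∩ Ioi t).ncard := by
  have hmem : ∀ s ∈ D, sInf (T ∩ Ioi s) ∈ T ∩ Ioi s := fun s hs =>
    (hne s hs).csInf_mem (hT.inter_of_left _)
  have hf : ∀ s ∈ D, sInf (T ∩ Ioi s) ∈ T ∩ Ioi t := by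
    intro s hs
    exact ⟨(hmem s hs).1, show t < sInf (T ∩ Ioi s) from
      lt_of_le_of_lt (hD hs) (hmem s hs).2⟩
  have key : ∀ s ∈ D, ∀ s' ∈ D, s < s' → sInf (T ∩ Ioi s) < sInf (T ∩ Ioi s') := by
    intro s hs s' hs' hlt
    obtain ⟨u, huT, h1, h2⟩ := hbet s hs s' hs' hlt
    have h3 : sInf (T ∩ Ioi s) ≤ u :=
      csInf_le ((hT.inter_of_left _).bddBelow) ⟨huT, h1⟩
    exact lt_of_le_of_lt h3 (lt_trans h2 (hmem s' hs').2)
  have hinj : Set.InjOn (fun s => sInf (T ∩ Ioi s)) D := by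
    intro a ha b hb hab
    rcases lt_trichotomy a b with h | h | h
    · exact absurd hab (ne_of_lt (key a ha b hb h))
    · exact h
    · exact absurd hab.symm (ne_of_lt (key b hb a ha h))
  exact Set.ncard_le_ncard_of_injOn _ hf hinj (hT.inter_of_left _)

lemma masterUpLe (D T : Set ℝ) (hT : T.Finite) (t : ℝ)
    (hmem' : ∀ s ∈ D, ∃ u ∈ T, s < u ∧ u ≤ t)
    (hbet : ∀ s ∈ D, ∀ s' ∈ D, s < s' → ∃ u ∈ T, s < u ∧ u < s') :
    D.ncard ≤ (T ∩ Iic t).ncard := by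
  have hne : ∀ s ∈ D, (T ∩ Ioi s).Nonempty := by
    intro s hs
    obtain ⟨u, h1, h2, _⟩ := hmem' s hs
    exact ⟨u, h1, h2⟩
  have hmem : ∀ s ∈ D, sInf (T ∩ Ioi s) ∈ T ∩ Ioi s := fun s hs =>
    (hne s hs).csInf_mem (hT.inter_of_left _)
  have hf : ∀ s ∈ D, sInf (T ∩ Ioi s) ∈ T ∩ Iic t := by
    intro s hs
    obtain ⟨u, h1, h2, h3⟩ := hmem' s hs
    exact ⟨(hmem s hs).1, show sInf (T ∩ Ioi s) ≤ t from
      le_trans (csInf_le ((hT.inter_of_left _).bddBelow) ⟨h1, h2⟩) h3⟩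
  have key : ∀ s ∈ D, ∀ s' ∈ D, s < s' → sInf (T ∩ Ioi s) < sInf (T ∩ Ioi s') := by
    intro s hs s' hs' hlt
    obtain ⟨u, huT, h1, h2⟩ := hbet s hs s' hs' hlt
    have h3 : sInf (T ∩ Ioi s) ≤ u :=
      csInf_le ((hT.inter_of_left _).bddBelow) ⟨huT, h1⟩
    exact lt_of_le_of_lt h3 (lt_trans h2 (hmem s' hs').2)
  have hinj : Set.InjOn (fun s => sInf (T ∩ Ioi s)) D := by
    intro a ha b hb hab
    rcases lt_trichotomy a b with h | h | h
    · exact absurd hab (ne_of_lt (key a ha b hb h))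
    · exact h
    · exact absurd hab.symm (ne_of_lt (key b hb a ha h))
  exact Set.ncard_le_ncard_of_injOn _ hf hinj (hT.inter_of_left _)


lemma no_root_pos (q : Polynomial ℝ) (hq : q.Monic) (hnr : ∀ x : ℝ, q.eval x ≠ 0) :
    0 < q.eval 0 := by
  rcases Nat.eq_zero_or_pos q.natDegree with hd | hd
  · have : q = 1 := hq.natDegree_eq_zero.mp hd
    simp [this]
  · by_contra hle
    push_neg at hle
    have h0 : q.eval 0 < 0 := lt_of_le_of_ne hle (hnr 0)
    have htop : Filter.Tendsto (fun x => q.eval x) Filter.atTop Filter.atTop := by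
      apply Polynomial.tendsto_atTop_of_leadingCoeff_nonneg
      · exact natDegree_pos_iff_degree_pos.mp hd
      · rw [hq.leadingCoeff]; norm_num
    obtain ⟨x, hx1, hx2⟩ := ((htop.eventually_ge_atTop 1).and (Filter.eventually_ge_atTop 0)).exists
    have hcont : ContinuousOn (fun x => q.eval x) (Icc 0 x) := (Polynomial.continuous q).continuousOn
    have : (0:ℝ) ∈ Icc (q.eval 0) (q.eval x) := ⟨le_of_lt h0, le_trans zero_le_one hx1⟩
    obtain ⟨y, _, hy⟩ := intermediate_value_Icc hx2 hcont this
    exact hnr y hy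

lemma sign_eval_zero_s12 (P : Polynomial ℝ) (hm : P.Monic)
    (hs : ∀ x : ℝ, P.eval x = 0 → (derivative P).eval x ≠ 0)
    (h0 : P.eval 0 ≠ 0) :
    ∃ r : ℝ, 0 < r ∧
      P.eval 0 = (-1) ^ (({x : ℝ | P.eval x = 0} ∩ Ioi 0).ncard) * r := by
  have hP0 : P ≠ 0 := hm.ne_zero
  -- roots are simple
  have hnodup : P.roots.Nodup := by
    rw [Multiset.nodup_iff_count_le_one]
    intro a
    rw [Polynomial.count_roots]
    by_contra hgt
    push_neg at hgt
    have hroot : P.IsRoot a := (Polynomial.rootMultiplicity_pos hP0).mp (by omega)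
    have hd : (derivative P).rootMultiplicity a = P.rootMultiplicity a - 1 :=
      Polynomial.derivative_rootMultiplicity_of_root hroot
    have hpos : 0 < (derivative P).rootMultiplicity a := by omega
    exact hs a hroot (Polynomial.rootMultiplicity_pos'.mp hpos).2
  obtain ⟨q, hq, _, hqroots⟩ := P.exists_prod_multiset_X_sub_C_mul
  have hprodmonic : ((P.roots.map fun a => X - C a).prod).Monic :=
    monic_multiset_prod_of_monic _ _ (fun a _ => monic_X_sub_C a)
  have hqmonic : q.Monic := by
    have h1 := congrArg Polynomial.leadingCoeff hq
    rwa [Polynomial.leadingCoeff_mul, hprodmonic.leadingCoeff, one_mul, hm.leadingCoeff]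
      at h1
  have hqnr : ∀ x : ℝ, q.eval x ≠ 0 := by
    intro x hx
    have : x ∈ q.roots := by
      rw [Polynomial.mem_roots hqmonic.ne_zero]; exact hx
    rw [hqroots] at this
    exact absurd this (Multiset.notMem_zero x)
  have hq0 : 0 < q.eval 0 := no_root_pos q hqmonic hqnr
  -- evaluate at 0
  have heval : P.eval 0 = (P.roots.map fun a => -a).prod * q.eval 0 := by
    conv_lhs => rw [← hq]
    rw [Polynomial.eval_mul, Polynomial.eval_multiset_prod, Multiset.map_map]
    congr 2
    apply Multiset.map_congr rfl
    intro a _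
    simp
  -- the finset of roots
  set s : Finset ℝ := P.roots.toFinset with hs_def
  have hsval : s.val = P.roots := by
    rw [hs_def, Multiset.toFinset_val, hnodup.dedup]
  have hprodfin : (P.roots.map fun a => -a).prod = ∏ a ∈ s, (-a) := by
    rw [Finset.prod_eq_multiset_prod, hsval]
  set spos : Finset ℝ := s.filter (fun a => 0 < a) with hspos_def
  set sneg : Finset ℝ := s.filter (fun a => ¬ 0 < a) with hsneg_def
  have hsplit : ∏ a ∈ s, (-a) = (∏ a ∈ spos, (-a)) * ∏ a ∈ sneg, (-a) :=
    (Finset.prod_filter_mul_prod_filter_not s _ _).symm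
  have hroot_ne : ∀ a ∈ s, a ≠ 0 := by
    intro a ha h0a
    have : P.IsRoot a := (Polynomial.mem_roots hP0).mp (Multiset.mem_toFinset.mp ha)
    rw [h0a] at this
    exact h0 this
  have hnegpos : 0 < ∏ a ∈ sneg, (-a) := by
    apply Finset.prod_pos
    intro a ha
    rw [hsneg_def, Finset.mem_filter] at ha
    have := hroot_ne a ha.1
    have := ha.2
    push_neg at this
    have : a < 0 := lt_of_le_of_ne ‹a ≤ 0› ‹a ≠ 0›
    linarith
  have hpospos : 0 < ∏ a ∈ spos, a := by
    apply Finset.prod_pos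
    intro a ha
    exact (Finset.mem_filter.mp ha).2
  have hposprod : ∏ a ∈ spos, (-a) = (-1) ^ spos.card * ∏ a ∈ spos, a := by
    rw [← Finset.prod_const, ← Finset.prod_mul_distrib]
    apply Finset.prod_congr rfl
    intro a _
    ring
  -- the ncard
  have hsetcount : ({x : ℝ | P.eval x = 0} ∩ Ioi 0) = ↑spos := by
    ext x
    simp only [hspos_def, Finset.coe_filter, mem_inter_iff, mem_setOf_eq, mem_Ioi,
      Multiset.mem_toFinset, hs_def]
    rw [Polynomial.mem_roots hP0]
    constructor
    · rintro ⟨h1, h2⟩; exact ⟨h1, h2⟩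
    · rintro ⟨h1, h2⟩; exact ⟨h1, h2⟩
  refine ⟨(∏ a ∈ spos, a) * (∏ a ∈ sneg, (-a)) * q.eval 0, by positivity, ?_⟩
  rw [hsetcount, Set.ncard_coe_finset, heval, hprodfin, hsplit, hposprod]
  ring

lemma case1 (A C : Set ℝ) (hAfin : A.Finite) (hCfin : C.Finite)
    (hbetAC : ∀ a ∈ A, ∀ b ∈ A, a < b → ∃ c ∈ C, a < c ∧ c < b)
    (hbetCA : ∀ a ∈ C, ∀ b ∈ C, a < b → ∃ c ∈ A, a < c ∧ c < b)
    (F1 : ∀ a ∈ A, ∃ c ∈ C, c < a) (h0A : (0:ℝ) ∈ A) :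
    (C ∩ Iio 0).ncard = (A ∩ Iio 0).ncard + 1 := by
  have hIic : A ∩ Iic 0 = insert 0 (A ∩ Iio 0) := by
    ext x
    simp only [mem_inter_iff, mem_Iic, mem_insert_iff, mem_Iio]
    constructor
    · rintro ⟨h1, h2⟩
      rcases eq_or_lt_of_le h2 with h | h
      · exact Or.inl h
      · exact Or.inr ⟨h1, h⟩
    · rintro (rfl | ⟨h1, h2⟩)
      · exact ⟨h0A, le_refl 0⟩
      · exact ⟨h1, le_of_lt h2⟩
  have hcard : (A ∩ Iic 0).ncard = (A ∩ Iio 0).ncard + 1 := by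
    rw [hIic]
    exact Set.ncard_insert_of_notMem (by simp) (hAfin.inter_of_left _)
  have LB : (A ∩ Iic 0).ncard ≤ (C ∩ Iio 0).ncard := by
    apply masterDown _ _ hCfin _ inter_subset_right
    · intro s hs
      obtain ⟨c, hc1, hc2⟩ := F1 s hs.1
      exact ⟨c, hc1, hc2⟩
    · intro s hs s' hs' h
      exact hbetAC s hs.1 s' hs'.1 h
  have UB : (C ∩ Iio 0).ncard ≤ (A ∩ Iic 0).ncard := by
    apply masterUpLe _ _ hAfin
    · intro s hs
      exact ⟨0, h0A, hs.2, le_refl 0⟩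
    · intro s hs s' hs' h
      exact hbetCA s hs.1 s' hs'.1 h
  omega

lemma case2 (A C : Set ℝ) (hAfin : A.Finite) (hCfin : C.Finite)
    (hbetAC : ∀ a ∈ A, ∀ b ∈ A, a < b → ∃ c ∈ C, a < c ∧ c < b)
    (hbetCA : ∀ a ∈ C, ∀ b ∈ C, a < b → ∃ c ∈ A, a < c ∧ c < b)
    (F1 : ∀ a ∈ A, ∃ c ∈ C, c < a) (h0C : (0:ℝ) ∈ C) (h0A : (0:ℝ) ∉ A) :
    (C ∩ Iio 0).ncard = (A ∩ Iio 0).ncard := by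
  have hIic : A ∩ Iic 0 = A ∩ Iio 0 := by
    ext x
    simp only [mem_inter_iff, mem_Iic, mem_Iio]
    constructor
    · rintro ⟨h1, h2⟩
      refine ⟨h1, lt_of_le_of_ne h2 ?_⟩
      rintro rfl
      exact h0A h1
    · rintro ⟨h1, h2⟩
      exact ⟨h1, le_of_lt h2⟩
  have LB : (A ∩ Iio 0).ncard ≤ (C ∩ Iio 0).ncard := by
    apply masterDown _ _ hCfin _ (fun x hx => le_of_lt (mem_Iio.mp hx.2))
    · intro s hs
      obtain ⟨c, hc1, hc2⟩ := F1 s hs.1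
      exact ⟨c, hc1, hc2⟩
    · intro s hs s' hs' h
      exact hbetAC s hs.1 s' hs'.1 h
  have UB : (C ∩ Iio 0).ncard ≤ (A ∩ Iic 0).ncard := by
    apply masterUpLe _ _ hAfin
    · intro s hs
      obtain ⟨u, hu1, hu2, hu3⟩ := hbetCA s hs.1 0 h0C hs.2
      exact ⟨u, hu1, hu2, le_of_lt hu3⟩
    · intro s hs s' hs' h
      exact hbetCA s hs.1 s' hs'.1 h
  rw [hIic] at UB
  omega

lemma partition0 (S : Set ℝ) (hfin : S.Finite) (h0 : (0:ℝ) ∉ S) :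
    S.ncard = (S ∩ Iio 0).ncard + (S ∩ Ioi 0).ncard := by
  have hdec : S = (S ∩ Iio 0) ∪ (S ∩ Ioi 0) := by
    ext x
    simp only [mem_union, mem_inter_iff, mem_Iio, mem_Ioi]
    constructor
    · intro hx
      rcases lt_trichotomy x 0 with h | h | h
      · exact Or.inl ⟨hx, h⟩
      · exact absurd (h ▸ hx) h0
      · exact Or.inr ⟨hx, h⟩
    · rintro (⟨h, _⟩ | ⟨h, _⟩) <;> exact h
  nth_rewrite 1 [hdec]
  apply Set.ncard_union_eq
  · rw [Set.disjoint_left]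
    rintro x ⟨_, h1⟩ ⟨_, h2⟩
    exact absurd (lt_trans h1 h2) (lt_irrefl x)
  · exact hfin.inter_of_left _
  · exact hfin.inter_of_left _

lemma case3 (A C : Set ℝ) (hAfin : A.Finite) (hCfin : C.Finite)
    (hAne : A.Nonempty) (hCne : C.Nonempty)
    (hbetAC : ∀ a ∈ A, ∀ b ∈ A, a < b → ∃ c ∈ C, a < c ∧ c < b)
    (hbetCA : ∀ a ∈ C, ∀ b ∈ C, a < b → ∃ c ∈ A, a < c ∧ c < b)
    (F1 : ∀ a ∈ A, ∃ c ∈ C, c < a) (F2 : ∀ a ∈ A, ∃ c ∈ C, a < c)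
    (h0A : (0:ℝ) ∉ A) (h0C : (0:ℝ) ∉ C)
    (hpar : (A ∩ Ioi 0).ncard % 2 = (C ∩ Ioi 0).ncard % 2) :
    (C ∩ Iio 0).ncard = (A ∩ Iio 0).ncard + 1 := by
  have hInfC : sInf C ∈ C := hCne.csInf_mem hCfin
  have hSupC : sSup C ∈ C := hCne.csSup_mem hCfin
  -- mLB
  have mLB : (A ∩ Iio 0).ncard ≤ (C ∩ Iio 0).ncard := by
    apply masterDown _ _ hCfin _ (fun x hx => le_of_lt (mem_Iio.mp hx.2))
    · intro s hs
      obtain ⟨c, hc1, hc2⟩ := F1 s hs.1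
      exact ⟨c, hc1, hc2⟩
    · intro s hs s' hs' h
      exact hbetAC s hs.1 s' hs'.1 h
  -- mUB
  have mUB : (C ∩ Iio 0).ncard ≤ (A ∩ Iio 0).ncard + 1 := by
    have hD : ((C ∩ Iio 0) \ {sInf C}).ncard ≤ (A ∩ Iio 0).ncard := by
      apply masterDown _ _ hAfin _ (fun x hx => le_of_lt (mem_Iio.mp hx.1.2))
      · intro s hs
        have h1 : sInf C < s :=
          lt_of_le_of_ne (csInf_le hCfin.bddBelow hs.1.1) (Ne.symm hs.2)
        obtain ⟨u, hu1, hu2, hu3⟩ := hbetCA _ hInfC s hs.1.1 h1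
        exact ⟨u, hu1, hu3⟩
      · intro s hs s' hs' h
        exact hbetCA s hs.1.1 s' hs'.1.1 h
    have hsub : (C ∩ Iio 0) ⊆ insert (sInf C) ((C ∩ Iio 0) \ {sInf C}) := by
      intro x hx
      by_cases h : x = sInf C
      · exact Or.inl h
      · exact Or.inr ⟨hx, h⟩
    calc (C ∩ Iio 0).ncard ≤ (insert (sInf C) ((C ∩ Iio 0) \ {sInf C})).ncard :=
          Set.ncard_le_ncard hsub (((hCfin.inter_of_left _).diff).insert _)
      _ ≤ ((C ∩ Iio 0) \ {sInf C}).ncard + 1 := Set.ncard_insert_le _ _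
      _ ≤ (A ∩ Iio 0).ncard + 1 := by omega
  -- pLB
  have pLB : (A ∩ Ioi 0).ncard ≤ (C ∩ Ioi 0).ncard := by
    apply masterUp _ _ hCfin _ (fun x hx => le_of_lt (mem_Ioi.mp hx.2))
    · intro s hs
      obtain ⟨c, hc1, hc2⟩ := F2 s hs.1
      exact ⟨c, hc1, hc2⟩
    · intro s hs s' hs' h
      exact hbetAC s hs.1 s' hs'.1 h
  -- pUB
  have pUB : (C ∩ Ioi 0).ncard ≤ (A ∩ Ioi 0).ncard + 1 := by
    have hD : ((C ∩ Ioi 0) \ {sSup C}).ncard ≤ (A ∩ Ioi 0).ncard := by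
      apply masterUp _ _ hAfin _ (fun x hx => le_of_lt (mem_Ioi.mp hx.1.2))
      · intro s hs
        have h1 : s < sSup C :=
          lt_of_le_of_ne (le_csSup hCfin.bddAbove hs.1.1) hs.2
        obtain ⟨u, hu1, hu2, hu3⟩ := hbetCA s hs.1.1 _ hSupC h1
        exact ⟨u, hu1, hu2⟩
      · intro s hs s' hs' h
        exact hbetCA s hs.1.1 s' hs'.1.1 h
    have hsub : (C ∩ Ioi 0) ⊆ insert (sSup C) ((C ∩ Ioi 0) \ {sSup C}) := by
      intro x hx
      by_cases h : x = sSup C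
      · exact Or.inl h
      · exact Or.inr ⟨hx, h⟩
    calc (C ∩ Ioi 0).ncard ≤ (insert (sSup C) ((C ∩ Ioi 0) \ {sSup C})).ncard :=
          Set.ncard_le_ncard hsub (((hCfin.inter_of_left _).diff).insert _)
      _ ≤ ((C ∩ Ioi 0) \ {sSup C}).ncard + 1 := Set.ncard_insert_le _ _
      _ ≤ (A ∩ Ioi 0).ncard + 1 := by omega
  -- total : C.ncard = A.ncard + 1
  have hCdec : C = insert (sInf C) (C ∩ Ioi (sInf C)) := by
    ext x
    simp only [mem_insert_iff, mem_inter_iff, mem_Ioi]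
    constructor
    · intro hx
      by_cases h : x = sInf C
      · exact Or.inl h
      · exact Or.inr ⟨hx, lt_of_le_of_ne (csInf_le hCfin.bddBelow hx) (Ne.symm h)⟩
    · rintro (rfl | ⟨h, _⟩)
      · exact hInfC
      · exact h
  have hCcard : C.ncard = (C ∩ Ioi (sInf C)).ncard + 1 := by
    conv_lhs => rw [hCdec]
    exact Set.ncard_insert_of_notMem (fun h => lt_irrefl _ (mem_Ioi.mp h.2)) (hCfin.inter_of_left _)
  have totLB : A.ncard ≤ (C ∩ Ioi (sInf C)).ncard := by
    apply masterUp _ _ hCfin _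
    · intro a ha
      have h1 : sInf A ≤ a := csInf_le hAfin.bddBelow ha
      have h2 : sInf C < sInf A := by
        obtain ⟨c, hc1, hc2⟩ := F1 _ (hAne.csInf_mem hAfin)
        exact lt_of_le_of_lt (csInf_le hCfin.bddBelow hc1) hc2
      exact le_of_lt (lt_of_lt_of_le h2 h1)
    · intro s hs
      obtain ⟨c, hc1, hc2⟩ := F2 s hs
      exact ⟨c, hc1, hc2⟩
    · exact hbetAC
  have totUB : (C ∩ Ioi (sInf C)).ncard ≤ A.ncard := by
    have h1 : (C ∩ Ioi (sInf C)).ncard ≤ (A ∩ Iio (sSup C)).ncard := by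
      apply masterDown _ _ hAfin _ (fun x hx => le_csSup hCfin.bddAbove hx.1)
      · intro s hs
        obtain ⟨u, hu1, hu2, hu3⟩ := hbetCA _ hInfC s hs.1 hs.2
        exact ⟨u, hu1, hu3⟩
      · intro s hs s' hs' h
        exact hbetCA s hs.1 s' hs'.1 h
    exact le_trans h1 (Set.ncard_le_ncard inter_subset_left hAfin)
  have htot : C.ncard = A.ncard + 1 := by omega
  have hApart := partition0 A hAfin h0A
  have hCpart := partition0 C hCfin h0C
  omega

lemma realRoots_finite (P : Polynomial ℝ) (h : P ≠ 0) : (realRoots P).Finite :=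
  Polynomial.finite_setOf_isRoot h

lemma parity_of_pos {k : ℕ} {r v : ℝ} (hr : 0 < r) (hv : v = (-1)^k * r) (h : 0 < v) :
    k % 2 = 0 := by
  rcases Nat.even_or_odd k with he | ho
  · exact Nat.even_iff.mp he
  · rw [ho.neg_one_pow] at hv
    simp only [neg_one_mul] at hv
    linarith
lemma parity_of_neg {k : ℕ} {r v : ℝ} (hr : 0 < r) (hv : v = (-1)^k * r) (h : v < 0) :
    k % 2 = 1 := by
  rcases Nat.even_or_odd k with he | ho
  · rw [he.neg_one_pow, one_mul] at hv
    linarith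
  · exact Nat.odd_iff.mp ho

theorem step (Q : ℕ → Polynomial ℝ)
    (hmonic : ∀ n, (Q n).Monic ∧ (Q n).natDegree = n * (n + 1) / 2)
    (hsimple : ∀ n, ∀ x : ℝ, (Q n).eval x = 0 → (derivative (Q n)).eval x ≠ 0)
    (hinter1 : ∀ n, ∀ a ∈ realRoots (Q n), ∀ b ∈ realRoots (Q n), a < b →
      ∃ c ∈ realRoots (Q (n + 2)), a < c ∧ c < b)
    (hinter2 : ∀ n, ∀ a ∈ realRoots (Q (n + 2)), ∀ b ∈ realRoots (Q (n + 2)), a < b →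
      ∃ c ∈ realRoots (Q n), a < c ∧ c < b)
    (hminmax : ∀ n : ℕ, 2 ≤ n →
      sInf (realRoots (Q (n - 1))) > sInf (realRoots (Q (n + 1))) ∧
      sSup (realRoots (Q (n - 1))) < sSup (realRoots (Q (n + 1))))
    (hsign : ∀ n : ℕ,
      ((n % 12 = 3 ∨ n % 12 = 5 ∨ n % 12 = 6 ∨ n % 12 = 8) → (Q n).eval 0 < 0) ∧
      ((n % 12 = 1 ∨ n % 12 = 4 ∨ n % 12 = 7 ∨ n % 12 = 10) → (Q n).eval 0 = 0) ∧
      ((n % 12 = 0 ∨ n % 12 = 2 ∨ n % 12 = 9 ∨ n % 12 = 11) → 0 < (Q n).eval 0))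
    (n : ℕ) (hn : 1 ≤ n) (hAne : (realRoots (Q n)).Nonempty)
    (hcnt : (realRoots (Q n) ∩ Iio 0).ncard = (n + 1) / 3) :
    (realRoots (Q (n + 2)) ∩ Iio 0).ncard = (n + 3) / 3 ∧
      (realRoots (Q (n + 2))).Nonempty := by
  set A := realRoots (Q n) with hA
  set C := realRoots (Q (n + 2)) with hC
  have hAfin : A.Finite := realRoots_finite _ (hmonic n).1.ne_zero
  have hCfin : C.Finite := realRoots_finite _ (hmonic (n + 2)).1.ne_zero
  have hmm := hminmax (n + 1) (by omega)
  have hmm1 : sInf C < sInf A := by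
    have := hmm.1
    simpa [hA, hC, Nat.add_sub_cancel] using this
  have hmm2 : sSup A < sSup C := by
    have := hmm.2
    simpa [hA, hC, Nat.add_sub_cancel] using this
  obtain ⟨a0, ha0⟩ := id hAne
  have hCne : C.Nonempty := by
    rcases C.eq_empty_or_nonempty with h | h
    · exfalso
      rw [h] at hmm1 hmm2
      simp only [Real.sInf_empty, Real.sSup_empty] at hmm1 hmm2
      have h1 : sInf A ≤ a0 := csInf_le hAfin.bddBelow ha0
      have h2 : a0 ≤ sSup A := le_csSup hAfin.bddAbove ha0
      linarith
    · exact h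
  have F1 : ∀ a ∈ A, ∃ c ∈ C, c < a := by
    intro a ha
    exact ⟨sInf C, hCne.csInf_mem hCfin,
      lt_of_lt_of_le hmm1 (csInf_le hAfin.bddBelow ha)⟩
  have F2 : ∀ a ∈ A, ∃ c ∈ C, a < c := by
    intro a ha
    exact ⟨sSup C, hCne.csSup_mem hCfin,
      lt_of_le_of_lt (le_csSup hAfin.bddAbove ha) hmm2⟩
  have hbetAC := hinter1 n
  have hbetCA := hinter2 n
  refine ⟨?_, hCne⟩
  have hmod : n % 3 = 0 ∨ n % 3 = 1 ∨ n % 3 = 2 := by omega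
  have hmod12 : n % 12 % 3 = n % 3 := by omega
  rcases hmod with h3 | h3 | h3
  · -- n ≡ 0 mod 3 : parity argument
    have h0A : (0:ℝ) ∉ A := by
      intro h0
      have hx : (Q n).eval 0 = 0 := h0
      rcases (by omega : n % 12 = 0 ∨ n % 12 = 3 ∨ n % 12 = 6 ∨ n % 12 = 9) with h | h | h | h
      · exact absurd hx (ne_of_gt ((hsign n).2.2 (Or.inl h)))
      · exact absurd hx (ne_of_lt ((hsign n).1 (Or.inl h)))
      · exact absurd hx (ne_of_lt ((hsign n).1 (Or.inr (Or.inr (Or.inl h)))))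
      · exact absurd hx (ne_of_gt ((hsign n).2.2 (Or.inr (Or.inr (Or.inl h)))))
    have h0C : (0:ℝ) ∉ C := by
      intro h0
      have hx : (Q (n + 2)).eval 0 = 0 := h0
      rcases (by omega : (n+2) % 12 = 2 ∨ (n+2) % 12 = 5 ∨ (n+2) % 12 = 8 ∨ (n+2) % 12 = 11)
        with h | h | h | h
      · exact absurd hx (ne_of_gt ((hsign (n+2)).2.2 (Or.inr (Or.inl h))))
      · exact absurd hx (ne_of_lt ((hsign (n+2)).1 (Or.inr (Or.inl h))))
      · exact absurd hx (ne_of_lt ((hsign (n+2)).1 (Or.inr (Or.inr (Or.inr h)))))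
      · exact absurd hx (ne_of_gt ((hsign (n+2)).2.2 (Or.inr (Or.inr (Or.inr h)))))
    obtain ⟨rA, hrA, hvA⟩ := sign_eval_zero_s12 (Q n) (hmonic n).1 (hsimple n)
      (fun h => h0A h)
    obtain ⟨rC, hrC, hvC⟩ := sign_eval_zero_s12 (Q (n+2)) (hmonic (n+2)).1 (hsimple (n+2))
      (fun h => h0C h)
    have hsetA : {x : ℝ | (Q n).eval x = 0} = A := rfl
    have hsetC : {x : ℝ | (Q (n+2)).eval x = 0} = C := rfl
    rw [hsetA] at hvA
    rw [hsetC] at hvC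
    have hpar : (A ∩ Ioi 0).ncard % 2 = (C ∩ Ioi 0).ncard % 2 := by
      rcases (by omega : n % 12 = 0 ∨ n % 12 = 3 ∨ n % 12 = 6 ∨ n % 12 = 9) with h | h | h | h
      · have hA0 : 0 < (Q n).eval 0 := (hsign n).2.2 (Or.inl h)
        have hC0 : 0 < (Q (n+2)).eval 0 := (hsign (n+2)).2.2 (Or.inr (Or.inl (by omega)))
        rw [parity_of_pos hrA hvA hA0, parity_of_pos hrC hvC hC0]
      · have hA0 : (Q n).eval 0 < 0 := (hsign n).1 (Or.inl h)
        have hC0 : (Q (n+2)).eval 0 < 0 := (hsign (n+2)).1 (Or.inr (Or.inl (by omega)))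
        rw [parity_of_neg hrA hvA hA0, parity_of_neg hrC hvC hC0]
      · have hA0 : (Q n).eval 0 < 0 := (hsign n).1 (Or.inr (Or.inr (Or.inl h)))
        have hC0 : (Q (n+2)).eval 0 < 0 :=
          (hsign (n+2)).1 (Or.inr (Or.inr (Or.inr (by omega))))
        rw [parity_of_neg hrA hvA hA0, parity_of_neg hrC hvC hC0]
      · have hA0 : 0 < (Q n).eval 0 := (hsign n).2.2 (Or.inr (Or.inr (Or.inl h)))
        have hC0 : 0 < (Q (n+2)).eval 0 :=
          (hsign (n+2)).2.2 (Or.inr (Or.inr (Or.inr (by omega))))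
        rw [parity_of_pos hrA hvA hA0, parity_of_pos hrC hvC hC0]
    have := case3 A C hAfin hCfin hAne hCne hbetAC hbetCA F1 F2 h0A h0C hpar
    rw [this, hcnt]
    omega
  · -- n ≡ 1 mod 3 : 0 ∈ A
    have h0A : (0:ℝ) ∈ A := by
      show (Q n).eval 0 = 0
      exact (hsign n).2.1 (by omega)
    have := case1 A C hAfin hCfin hbetAC hbetCA F1 h0A
    rw [this, hcnt]
    omega
  · -- n ≡ 2 mod 3 : 0 ∈ C
    have h0C : (0:ℝ) ∈ C := by
      show (Q (n+2)).eval 0 = 0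
      exact (hsign (n+2)).2.1 (by omega)
    have h0A : (0:ℝ) ∉ A := by
      intro h0
      have hx : (Q n).eval 0 = 0 := h0
      rcases (by omega : n % 12 = 2 ∨ n % 12 = 5 ∨ n % 12 = 8 ∨ n % 12 = 11) with h | h | h | h
      · exact absurd hx (ne_of_gt ((hsign n).2.2 (Or.inr (Or.inl h))))
      · exact absurd hx (ne_of_lt ((hsign n).1 (Or.inr (Or.inl h))))
      · exact absurd hx (ne_of_lt ((hsign n).1 (Or.inr (Or.inr (Or.inr h)))))
      · exact absurd hx (ne_of_gt ((hsign n).2.2 (Or.inr (Or.inr (Or.inr h)))))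
    have := case2 A C hAfin hCfin hbetAC hbetCA F1 h0C h0A
    rw [this, hcnt]
    omega

end YVAux

theorem number_of_negative_real_roots (Q : ℕ → Polynomial ℝ)
    (hQ0 : Q 0 = 1) (hQ1 : Q 1 = X)
    (hrec : ∀ n, Q (n + 2) * Q n =
      X * (Q (n + 1)) ^ 2 -
        4 * (Q (n + 1) * derivative (derivative (Q (n + 1))) - (derivative (Q (n + 1))) ^ 2))
    (hmonic : ∀ n, (Q n).Monic ∧ (Q n).natDegree = n * (n + 1) / 2)
    (hsimple : ∀ n, ∀ x : ℝ, (Q n).eval x = 0 → (derivative (Q n)).eval x ≠ 0)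
    (hnocommon1 : ∀ n, ∀ x : ℝ, ¬((Q n).eval x = 0 ∧ (Q (n + 1)).eval x = 0))
    (hnocommon2 : ∀ n, ∀ x : ℝ, ¬((Q n).eval x = 0 ∧ (Q (n + 2)).eval x = 0))
    (hinter1 : ∀ n, ∀ a ∈ realRoots (Q n), ∀ b ∈ realRoots (Q n), a < b →
      ∃ c ∈ realRoots (Q (n + 2)), a < c ∧ c < b)
    (hinter2 : ∀ n, ∀ a ∈ realRoots (Q (n + 2)), ∀ b ∈ realRoots (Q (n + 2)), a < b →
      ∃ c ∈ realRoots (Q n), a < c ∧ c < b)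
    (hminmax : ∀ n : ℕ, 2 ≤ n →
      sInf (realRoots (Q (n - 1))) > sInf (realRoots (Q (n + 1))) ∧
      sSup (realRoots (Q (n - 1))) < sSup (realRoots (Q (n + 1))))
    (hsign : ∀ n : ℕ,
      ((n % 12 = 3 ∨ n % 12 = 5 ∨ n % 12 = 6 ∨ n % 12 = 8) → (Q n).eval 0 < 0) ∧
      ((n % 12 = 1 ∨ n % 12 = 4 ∨ n % 12 = 7 ∨ n % 12 = 10) → (Q n).eval 0 = 0) ∧
      ((n % 12 = 0 ∨ n % 12 = 2 ∨ n % 12 = 9 ∨ n % 12 = 11) → 0 < (Q n).eval 0))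
    : ∀ n : ℕ, (realRoots (Q n) ∩ Set.Iio 0).ncard = (n + 1) / 3 := by
  have hr0 : realRoots (Q 0) = ∅ := by
    ext x
    simp [realRoots, hQ0]
  have hr1 : realRoots (Q 1) = {0} := by
    ext x
    simp [realRoots, hQ1]
  have e2 : Q 2 = X ^ 3 + 4 := by
    have h := hrec 0
    rw [hQ0, hQ1, derivative_X, derivative_one, mul_one] at h
    rw [h]
    ring
  set c : ℝ := -(4:ℝ) ^ ((1:ℝ)/3) with hc
  have hcpow : c ^ 3 = -4 := by
    have h4 : ((4:ℝ) ^ ((1:ℝ)/3)) ^ (3:ℕ) = 4 := by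
      rw [← Real.rpow_natCast ((4:ℝ) ^ ((1:ℝ)/3)) 3, ← Real.rpow_mul (by norm_num)]
      norm_num
    rw [hc, Odd.neg_pow (by decide), h4]
  have hcneg : c < 0 := by
    rw [hc, neg_lt_zero]
    exact Real.rpow_pos_of_pos (by norm_num) _
  have hr2 : realRoots (Q 2) = {c} := by
    ext x
    simp only [realRoots, e2, Set.mem_setOf_eq, Set.mem_singleton_iff, eval_add, eval_pow,
      eval_X]
    constructor
    · intro h
      have hx : x ^ 3 = c ^ 3 := by
        rw [hcpow]
        have : eval x (4 : Polynomial ℝ) = 4 := by norm_num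
        linarith [h, this]
      exact (Odd.strictMono_pow (R := ℝ) (by decide)).injective hx
    · rintro rfl
      have : eval c (4 : Polynomial ℝ) = 4 := by norm_num
      rw [this, hcpow]
      ring
  have main : ∀ m : ℕ, (realRoots (Q m) ∩ Set.Iio 0).ncard = (m + 1) / 3 ∧
      (1 ≤ m → (realRoots (Q m)).Nonempty) := by
    intro m
    induction m using Nat.strong_induction_on with
    | _ m ih =>
      rcases m with _ | _ | _ | k
      · constructor
        · rw [hr0]
          simp
        · intro h
          omega
      · constructor
        · rw [hr1]
          have h : ({(0:ℝ)} : Set ℝ) ∩ Set.Iio 0 = ∅ := by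
            ext x
            simp only [Set.mem_inter_iff, Set.mem_singleton_iff, Set.mem_Iio,
              Set.mem_empty_iff_false, iff_false]
            rintro ⟨rfl, h⟩
            exact lt_irrefl 0 h
          rw [h]
          simp
        · intro _
          rw [hr1]
          exact ⟨0, rfl⟩
      · constructor
        · rw [hr2]
          have h : ({c} : Set ℝ) ∩ Set.Iio 0 = {c} := by
            ext x
            simp only [Set.mem_inter_iff, Set.mem_singleton_iff, Set.mem_Iio]
            constructor
            · rintro ⟨rfl, _⟩
              rfl
            · rintro rfl
              exact ⟨rfl, hcneg⟩
          rw [h]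
          simp
        · intro _
          rw [hr2]
          exact ⟨c, rfl⟩
      · have ihk := ih (k + 1) (by omega)
        have hs := step Q hmonic hsimple hinter1 hinter2 hminmax hsign (k + 1) (by omega)
          (ihk.2 (by omega)) (ihk.1)
        exact ⟨hs.1, fun _ => hs.2⟩
  intro n
  exact (main n).1
end

section
/- For every n ∈ ℕ, the number of positive real roots of the n-th Yablonskii–Vorob'ev polynomial Q_n equals ⌊n/6⌋ if n is even, and ⌊(n+3)/6⌋ if n is odd. -/
open Polynomial

/-- If between any two elements of `S` there is an element of `T`, and `t ∈ S`,
then `S` has at most as many elements above `t` as `T` does. -/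
private lemma count_le_aux (S T : Set ℝ) (hS : S.Finite) (hT : T.Finite)
    (hb : ∀ a ∈ S, ∀ b ∈ S, a < b → ∃ c ∈ T, a < c ∧ c < b)
    (t : ℝ) (ht : t ∈ S) :
    (S ∩ Set.Ioi t).ncard ≤ (T ∩ Set.Ioi t).ncard := by
  classical
  have key : ∀ s ∈ S ∩ Set.Ioi t, ∃ c, c ∈ T ∩ Set.Ioi t ∧
      sSup (S ∩ Set.Ico t s) < c ∧ c < s := by
    intro s hs
    obtain ⟨hsS, hst⟩ := hs
    have hne : (S ∩ Set.Ico t s).Nonempty := ⟨t, ht, le_refl t, hst⟩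
    have hfin : (S ∩ Set.Ico t s).Finite := hS.inter_of_left _
    have hmem := hne.csSup_mem hfin
    obtain ⟨hpS, hpt, hps⟩ := hmem
    obtain ⟨c, hcT, h1, h2⟩ := hb _ hpS s hsS hps
    exact ⟨c, ⟨hcT, lt_of_le_of_lt hpt h1⟩, h1, h2⟩
  set f : ℝ → ℝ := fun s => if h : s ∈ S ∩ Set.Ioi t then (key s h).choose else 0 with hf
  have mono : ∀ a ∈ S ∩ Set.Ioi t, ∀ b ∈ S ∩ Set.Ioi t, a < b → f a < f b := by
    intro a ha b hb' hab
    have sa := (key a ha).choose_spec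
    have sb := (key b hb').choose_spec
    have hamem : a ∈ S ∩ Set.Ico t b := ⟨ha.1, le_of_lt ha.2, hab⟩
    have hle : a ≤ sSup (S ∩ Set.Ico t b) :=
      le_csSup ((hS.inter_of_left _).bddAbove) hamem
    simp only [hf, dif_pos ha, dif_pos hb']
    exact lt_trans (lt_of_lt_of_le sa.2.2 hle) sb.2.1
  have hmaps : ∀ a ∈ S ∩ Set.Ioi t, f a ∈ T ∩ Set.Ioi t := by
    intro a ha
    simp only [hf, dif_pos ha]
    exact ((key a ha).choose_spec).1
  have hinj : Set.InjOn f (S ∩ Set.Ioi t) := by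
    intro a ha b hb' hfab
    by_contra hne
    rcases lt_or_gt_of_ne hne with h | h
    · exact absurd hfab (ne_of_lt (mono a ha b hb' h))
    · exact absurd hfab.symm (ne_of_lt (mono b hb' a ha h))
  exact Set.ncard_le_ncard_of_injOn f hmaps hinj (hT.inter_of_left _)

/-- Without assuming `t ∈ S`, we lose at most one. -/
private lemma count_le_aux' (S T : Set ℝ) (hS : S.Finite) (hT : T.Finite)
    (hb : ∀ a ∈ S, ∀ b ∈ S, a < b → ∃ c ∈ T, a < c ∧ c < b)
    (t : ℝ) :
    (S ∩ Set.Ioi t).ncard ≤ (T ∩ Set.Ioi t).ncard + 1 := by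
  rcases Set.eq_empty_or_nonempty (S ∩ Set.Ioi t) with h | h
  · simp [h]
  · have hfin : (S ∩ Set.Ioi t).Finite := hS.inter_of_left _
    set m := sInf (S ∩ Set.Ioi t) with hmdef
    have hm : m ∈ S ∩ Set.Ioi t := h.csInf_mem hfin
    have h1 : (S ∩ Set.Ioi m).ncard ≤ (T ∩ Set.Ioi m).ncard :=
      count_le_aux S T hS hT hb m hm.1
    have h2 : S ∩ Set.Ioi t ⊆ insert m (S ∩ Set.Ioi m) := by
      intro x hx
      rcases eq_or_ne x m with rfl | hxm
      · exact Set.mem_insert _ _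
      · refine Set.mem_insert_of_mem _ ⟨hx.1, ?_⟩
        have hle : m ≤ x := csInf_le hfin.bddBelow hx
        exact lt_of_le_of_ne hle (Ne.symm hxm)
    have h3 : T ∩ Set.Ioi m ⊆ T ∩ Set.Ioi t := by
      intro x hx
      exact ⟨hx.1, Set.mem_Ioi.mpr (lt_trans (Set.mem_Ioi.mp hm.2) (Set.mem_Ioi.mp hx.2))⟩
    have h4 := Set.ncard_le_ncard h3 (hT.inter_of_left _)
    calc (S ∩ Set.Ioi t).ncard ≤ (insert m (S ∩ Set.Ioi m)).ncard :=
          Set.ncard_le_ncard h2 ((hS.inter_of_left _).insert m)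
      _ ≤ (S ∩ Set.Ioi m).ncard + 1 := Set.ncard_insert_le _ _
      _ ≤ (T ∩ Set.Ioi t).ncard + 1 := by omega

/-- If between any two elements of `S` there is an element of `T`, and `T` has an
element `m` above everything in `S` (and above `t`), then `T` has at least as many
elements above `t` as `S` has in `[t, ∞)`. -/
private lemma count_ge_aux (S T : Set ℝ) (hS : S.Finite) (hT : T.Finite)
    (hb : ∀ a ∈ S, ∀ b ∈ S, a < b → ∃ c ∈ T, a < c ∧ c < b)
    (m : ℝ) (hmT : m ∈ T) (hm : ∀ s ∈ S, s < m) (t : ℝ) (htm : t < m) :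
    (S ∩ Set.Ici t).ncard ≤ (T ∩ Set.Ioi t).ncard := by
  classical
  have key : ∀ s ∈ S ∩ Set.Ici t, ∃ c, c ∈ T ∩ Set.Ioi t ∧ s < c ∧
      ∀ s' ∈ S, s < s' → c < s' := by
    intro s hs
    rcases Set.eq_empty_or_nonempty (S ∩ Set.Ioi s) with hU | hU
    · refine ⟨m, ⟨hmT, htm⟩, hm s hs.1, ?_⟩
      intro s' hs' hss'
      exact absurd (show s' ∈ S ∩ Set.Ioi s from ⟨hs', hss'⟩) (by simp [hU])
    · have hfinU : (S ∩ Set.Ioi s).Finite := hS.inter_of_left _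
      have hNmem := hU.csInf_mem hfinU
      obtain ⟨c, hcT, h1, h2⟩ := hb s hs.1 _ hNmem.1 hNmem.2
      refine ⟨c, ⟨hcT, lt_of_le_of_lt hs.2 h1⟩, h1, ?_⟩
      intro s' hs' hss'
      exact lt_of_lt_of_le h2 (csInf_le hfinU.bddBelow ⟨hs', hss'⟩)
  set f : ℝ → ℝ := fun s => if h : s ∈ S ∩ Set.Ici t then (key s h).choose else 0 with hf
  have mono : ∀ a ∈ S ∩ Set.Ici t, ∀ b ∈ S ∩ Set.Ici t, a < b → f a < f b := by
    intro a ha b hb' hab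
    have sa := (key a ha).choose_spec
    have sb := (key b hb').choose_spec
    simp only [hf, dif_pos ha, dif_pos hb']
    exact lt_trans (sa.2.2 b hb'.1 hab) sb.2.1
  have hmaps : ∀ a ∈ S ∩ Set.Ici t, f a ∈ T ∩ Set.Ioi t := by
    intro a ha
    simp only [hf, dif_pos ha]
    exact ((key a ha).choose_spec).1
  have hinj : Set.InjOn f (S ∩ Set.Ici t) := by
    intro a ha b hb' hfab
    by_contra hne
    rcases lt_or_gt_of_ne hne with h | h
    · exact absurd hfab (ne_of_lt (mono a ha b hb' h))
    · exact absurd hfab.symm (ne_of_lt (mono b hb' a ha h))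
  exact Set.ncard_le_ncard_of_injOn f hmaps hinj (hT.inter_of_left _)

/-- Sign of a monic polynomial at `0` is determined by the parity of the number of
positive real roots, provided `0` is not a root and all positive roots are simple. -/
private lemma sign_parity : ∀ (k : ℕ) (P : Polynomial ℝ), P.Monic → P.eval 0 ≠ 0 →
    (∀ x : ℝ, 0 < x → P.eval x = 0 → (derivative P).eval x ≠ 0) →
    (realRoots P ∩ Set.Ioi 0).ncard = k → (0 < P.eval 0 ↔ Even k) := by
  intro k
  induction k with
  | zero =>
    intro P hm h0 _ hcard
    simp only [Even.zero, iff_true]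
    have hfin : (realRoots P).Finite := Polynomial.finite_setOf_isRoot hm.ne_zero
    have hempty : realRoots P ∩ Set.Ioi 0 = ∅ :=
      (Set.ncard_eq_zero (hfin.inter_of_left _)).mp hcard
    rcases h0.lt_or_gt with hneg | hpos
    · exfalso
      have hdeg : 0 < P.degree := by
        by_contra hd
        have h1 : P = 1 := hm.degree_le_zero_iff_eq_one.mp (not_lt.mp hd)
        rw [h1] at hneg
        norm_num at hneg
      have htend := Polynomial.tendsto_atTop_of_leadingCoeff_nonneg P hdeg
        (by rw [hm.leadingCoeff]; norm_num)
      obtain ⟨M, hM1, hM2⟩ :=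
        ((htend.eventually_gt_atTop 0).and (Filter.eventually_gt_atTop 0)).exists
      have hcont : ContinuousOn (fun x => P.eval x) (Set.Icc 0 M) :=
        (Polynomial.continuous P).continuousOn
      have hmem : (0:ℝ) ∈ Set.Ioo (P.eval 0) (P.eval M) := ⟨hneg, hM1⟩
      obtain ⟨x, hx, hPx⟩ := intermediate_value_Ioo (le_of_lt hM2) hcont hmem
      exact absurd (show x ∈ realRoots P ∩ Set.Ioi 0 from ⟨hPx, hx.1⟩)
        (by simp [hempty])
    · exact hpos
  | succ k ih =>
    intro P hm h0 hs hcard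
    have hPne : P ≠ 0 := hm.ne_zero
    have hfin : (realRoots P).Finite := Polynomial.finite_setOf_isRoot hPne
    have hfinI : (realRoots P ∩ Set.Ioi 0).Finite := hfin.inter_of_left _
    have hne : (realRoots P ∩ Set.Ioi 0).Nonempty :=
      Set.nonempty_of_ncard_ne_zero (by omega)
    set r := sSup (realRoots P ∩ Set.Ioi 0) with hrdef
    have hr : r ∈ realRoots P ∩ Set.Ioi 0 := hne.csSup_mem hfinI
    have hr0 : (0:ℝ) < r := hr.2
    have hroot : P.IsRoot r := hr.1
    set R := P /ₘ (X - C r) with hRdef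
    have hfact : (X - C r) * R = P := (Polynomial.mul_divByMonic_eq_iff_isRoot).mpr hroot
    have hRmonic : R.Monic :=
      (Polynomial.monic_X_sub_C r).of_mul_monic_left (by rw [hfact]; exact hm)
    have hRval : ∀ x : ℝ, P.eval x = (x - r) * R.eval x := by
      intro x
      conv_lhs => rw [← hfact]
      simp [eval_mul, eval_sub, eval_X, eval_C]
    have hder : ∀ x : ℝ, (derivative P).eval x
        = R.eval x + (x - r) * (derivative R).eval x := by
      intro x
      conv_lhs => rw [← hfact]
      rw [derivative_mul, derivative_X_sub_C]
      simp [eval_add, eval_mul, eval_sub, eval_X, eval_C]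
    have hRr : R.eval r ≠ 0 := by
      intro hcontra
      apply hs r hr0 hroot
      rw [hder r, hcontra]
      ring
    have hR0ne : R.eval 0 ≠ 0 := by
      intro h
      apply h0
      rw [hRval 0, h, mul_zero]
    have hsetR : realRoots R ∩ Set.Ioi 0 = (realRoots P ∩ Set.Ioi 0) \ {r} := by
      ext x
      simp only [realRoots, Set.mem_inter_iff, Set.mem_setOf_eq, Set.mem_diff,
        Set.mem_singleton_iff, Set.mem_Ioi]
      constructor
      · rintro ⟨hx, hx0⟩
        have hxr : x ≠ r := by
          rintro rfl
          exact hRr hx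
        exact ⟨⟨by rw [hRval x, hx, mul_zero], hx0⟩, hxr⟩
      · rintro ⟨⟨hx, hx0⟩, hxr⟩
        refine ⟨?_, hx0⟩
        have heq := hRval x
        rw [hx] at heq
        rcases mul_eq_zero.mp heq.symm with h | h
        · exact absurd (sub_eq_zero.mp h) hxr
        · exact h
    have hcardR : (realRoots R ∩ Set.Ioi 0).ncard = k := by
      rw [hsetR, Set.ncard_diff_singleton_of_mem hr, hcard]
      omega
    have hsR : ∀ x : ℝ, 0 < x → R.eval x = 0 → (derivative R).eval x ≠ 0 := by
      intro x hx hRx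
      have hxr : x ≠ r := fun h => hRr (h ▸ hRx)
      have hPx : P.eval x = 0 := by rw [hRval x, hRx, mul_zero]
      have hP'x := hs x hx hPx
      rw [hder x, hRx, zero_add] at hP'x
      intro h
      apply hP'x
      rw [h, mul_zero]
    have hIH := ih R hRmonic hR0ne hsR hcardR
    have hP0 : P.eval 0 = -r * R.eval 0 := by rw [hRval 0]; ring
    rw [hP0, Nat.even_add_one, ← hIH]
    constructor
    · intro h hR0pos
      nlinarith
    · intro h
      rcases hR0ne.lt_or_gt with hneg | hpos
      · nlinarith
      · exact absurd hpos h

theorem number_of_positive_real_roots (Q : ℕ → Polynomial ℝ)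
    (hQ0 : Q 0 = 1) (hQ1 : Q 1 = X)
    (hrec : ∀ n, Q (n + 2) * Q n =
      X * (Q (n + 1)) ^ 2 -
        4 * (Q (n + 1) * derivative (derivative (Q (n + 1))) - (derivative (Q (n + 1))) ^ 2))
    (hmonic : ∀ n, (Q n).Monic ∧ (Q n).natDegree = n * (n + 1) / 2)
    (hsimple : ∀ n, ∀ x : ℝ, (Q n).eval x = 0 → (derivative (Q n)).eval x ≠ 0)
    (hnocommon1 : ∀ n, ∀ x : ℝ, ¬((Q n).eval x = 0 ∧ (Q (n + 1)).eval x = 0))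
    (hnocommon2 : ∀ n, ∀ x : ℝ, ¬((Q n).eval x = 0 ∧ (Q (n + 2)).eval x = 0))
    (hinter1 : ∀ n, ∀ a ∈ realRoots (Q n), ∀ b ∈ realRoots (Q n), a < b →
      ∃ c ∈ realRoots (Q (n + 2)), a < c ∧ c < b)
    (hinter2 : ∀ n, ∀ a ∈ realRoots (Q (n + 2)), ∀ b ∈ realRoots (Q (n + 2)), a < b →
      ∃ c ∈ realRoots (Q n), a < c ∧ c < b)
    (hminmax : ∀ n : ℕ, 2 ≤ n →
      sInf (realRoots (Q (n - 1))) > sInf (realRoots (Q (n + 1))) ∧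
      sSup (realRoots (Q (n - 1))) < sSup (realRoots (Q (n + 1))))
    (hsign : ∀ n : ℕ,
      ((n % 12 = 3 ∨ n % 12 = 5 ∨ n % 12 = 6 ∨ n % 12 = 8) → (Q n).eval 0 < 0) ∧
      ((n % 12 = 1 ∨ n % 12 = 4 ∨ n % 12 = 7 ∨ n % 12 = 10) → (Q n).eval 0 = 0) ∧
      ((n % 12 = 0 ∨ n % 12 = 2 ∨ n % 12 = 9 ∨ n % 12 = 11) → 0 < (Q n).eval 0))
    : ∀ n : ℕ, (realRoots (Q n) ∩ Set.Ioi 0).ncard =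
        if n % 2 = 0 then n / 6 else (n + 3) / 6 := by
  have hQne : ∀ m, Q m ≠ 0 := fun m => (hmonic m).1.ne_zero
  have hfin : ∀ m, (realRoots (Q m)).Finite :=
    fun m => Polynomial.finite_setOf_isRoot (hQne m)
  have hroot0 : ∀ m : ℕ, (m % 12 = 1 ∨ m % 12 = 4 ∨ m % 12 = 7 ∨ m % 12 = 10) →
      (0:ℝ) ∈ realRoots (Q m) := by
    intro m h
    simpa [realRoots] using (hsign m).2.1 h
  -- lower bound on number of positive roots
  have hlow : ∀ n : ℕ, 1 ≤ n → (∃ a ∈ realRoots (Q n), (0:ℝ) ≤ a) →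
      (realRoots (Q n) ∩ Set.Ici 0).ncard ≤ (realRoots (Q (n + 2)) ∩ Set.Ioi 0).ncard := by
    intro n hn ha
    obtain ⟨a, haS, ha0⟩ := ha
    have hmm := (hminmax (n + 1) (by omega)).2
    have hsimp : n + 1 - 1 = n := by omega
    rw [hsimp] at hmm
    have haS' : a ≤ sSup (realRoots (Q n)) := le_csSup (hfin n).bddAbove haS
    have hSne : (realRoots (Q (n + 2))).Nonempty := by
      by_contra h
      rw [Set.not_nonempty_iff_eq_empty] at h
      have h2 : sSup (realRoots (Q (n + 1 + 1))) = 0 := by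
        rw [show n + 1 + 1 = n + 2 from rfl, h]
        exact Real.sSup_empty
      rw [h2] at hmm
      linarith
    have hmmem : sSup (realRoots (Q (n + 2))) ∈ realRoots (Q (n + 2)) :=
      hSne.csSup_mem (hfin _)
    have hup : ∀ s ∈ realRoots (Q n), s < sSup (realRoots (Q (n + 2))) := fun s hsS =>
      lt_of_le_of_lt (le_csSup (hfin n).bddAbove hsS) hmm
    have h0m : (0:ℝ) < sSup (realRoots (Q (n + 2))) :=
      lt_of_le_of_lt (le_trans ha0 haS') hmm
    exact count_ge_aux _ _ (hfin n) (hfin _) (hinter1 n) _ hmmem hup 0 h0m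
  -- the two-step induction step
  have step : ∀ n : ℕ,
      (realRoots (Q n) ∩ Set.Ioi 0).ncard = (if n % 2 = 0 then n / 6 else (n + 3) / 6) →
      (realRoots (Q (n + 2)) ∩ Set.Ioi 0).ncard
        = (if (n + 2) % 2 = 0 then (n + 2) / 6 else (n + 2 + 3) / 6) := by
    intro n hA
    have hIoisub : ∀ m : ℕ, (realRoots (Q m) ∩ Set.Ioi 0).ncard
        ≤ (realRoots (Q m) ∩ Set.Ici 0).ncard :=
      fun m => Set.ncard_le_ncard
        (fun x hx => ⟨hx.1, Set.mem_Ici.mpr (le_of_lt (Set.mem_Ioi.mp hx.2))⟩) ((hfin m).inter_of_left _)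
    rcases (show n % 3 = 0 ∨ n % 3 = 1 ∨ n % 3 = 2 by omega) with h3 | h3 | h3
    · -- neither Q n nor Q (n+2) vanishes at 0 : use sign parity
      have hsgns : (0 < (Q n).eval 0 ∧ 0 < (Q (n + 2)).eval 0) ∨
          ((Q n).eval 0 < 0 ∧ (Q (n + 2)).eval 0 < 0) := by
        rcases (show n % 12 = 0 ∨ n % 12 = 3 ∨ n % 12 = 6 ∨ n % 12 = 9 by omega)
          with h | h | h | h
        · exact Or.inl ⟨(hsign n).2.2 (by omega), (hsign (n + 2)).2.2 (by omega)⟩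
        · exact Or.inr ⟨(hsign n).1 (by omega), (hsign (n + 2)).1 (by omega)⟩
        · exact Or.inr ⟨(hsign n).1 (by omega), (hsign (n + 2)).1 (by omega)⟩
        · exact Or.inl ⟨(hsign n).2.2 (by omega), (hsign (n + 2)).2.2 (by omega)⟩
      have hne0n : (Q n).eval 0 ≠ 0 := by
        rcases hsgns with ⟨h, _⟩ | ⟨h, _⟩
        · exact ne_of_gt h
        · exact ne_of_lt h
      have hne0n2 : (Q (n + 2)).eval 0 ≠ 0 := by
        rcases hsgns with ⟨_, h⟩ | ⟨_, h⟩
        · exact ne_of_gt h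
        · exact ne_of_lt h
      have hub : (realRoots (Q (n + 2)) ∩ Set.Ioi 0).ncard
          ≤ (realRoots (Q n) ∩ Set.Ioi 0).ncard + 1 :=
        count_le_aux' _ _ (hfin _) (hfin n) (hinter2 n) 0
      have hlb : (realRoots (Q n) ∩ Set.Ioi 0).ncard
          ≤ (realRoots (Q (n + 2)) ∩ Set.Ioi 0).ncard := by
        rcases Set.eq_empty_or_nonempty (realRoots (Q n) ∩ Set.Ioi 0) with h | h
        · rw [h]
          simp
        · obtain ⟨a, haS, ha0⟩ := h
          have hn1 : 1 ≤ n := by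
            rcases Nat.eq_zero_or_pos n with rfl | h'
            · exfalso
              rw [hQ0] at haS
              simp [realRoots] at haS
            · exact h'
          have := hlow n hn1 ⟨a, haS, le_of_lt ha0⟩
          have h2 := hIoisub n
          omega
      have hparA := sign_parity ((realRoots (Q n) ∩ Set.Ioi 0).ncard) (Q n)
        (hmonic n).1 hne0n (fun x _ hx => hsimple n x hx) rfl
      have hparC := sign_parity ((realRoots (Q (n + 2)) ∩ Set.Ioi 0).ncard) (Q (n + 2))
        (hmonic (n + 2)).1 hne0n2 (fun x _ hx => hsimple (n + 2) x hx) rfl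
      have hpar : (realRoots (Q n) ∩ Set.Ioi 0).ncard % 2
          = (realRoots (Q (n + 2)) ∩ Set.Ioi 0).ncard % 2 := by
        rcases hsgns with ⟨h1, h2⟩ | ⟨h1, h2⟩
        · have e1 := hparA.mp h1
          have e2 := hparC.mp h2
          rw [Nat.even_iff] at e1 e2
          omega
        · have e1 : ¬ Even (realRoots (Q n) ∩ Set.Ioi 0).ncard := fun he =>
            absurd (hparA.mpr he) (by linarith)
          have e2 : ¬ Even (realRoots (Q (n + 2)) ∩ Set.Ioi 0).ncard := fun he =>
            absurd (hparC.mpr he) (by linarith)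
          rw [Nat.even_iff] at e1 e2
          omega
      have heq : (realRoots (Q (n + 2)) ∩ Set.Ioi 0).ncard
          = (realRoots (Q n) ∩ Set.Ioi 0).ncard := by omega
      rw [heq, hA]
      by_cases h2 : n % 2 = 0
      · rw [if_pos h2, if_pos (show (n + 2) % 2 = 0 by omega)]
        omega
      · rw [if_neg h2, if_neg (show ¬ (n + 2) % 2 = 0 by omega)]
        omega
    · -- 0 is a root of Q n : count goes up by one
      have h0S : (0:ℝ) ∈ realRoots (Q n) := hroot0 n (by omega)
      have hub : (realRoots (Q (n + 2)) ∩ Set.Ioi 0).ncard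
          ≤ (realRoots (Q n) ∩ Set.Ioi 0).ncard + 1 :=
        count_le_aux' _ _ (hfin _) (hfin n) (hinter2 n) 0
      have hlb := hlow n (by omega) ⟨0, h0S, le_refl 0⟩
      have hIci : (realRoots (Q n) ∩ Set.Ici 0).ncard
          = (realRoots (Q n) ∩ Set.Ioi 0).ncard + 1 := by
        have hins : realRoots (Q n) ∩ Set.Ici 0
            = insert 0 (realRoots (Q n) ∩ Set.Ioi 0) := by
          ext x
          simp only [Set.mem_inter_iff, Set.mem_Ici, Set.mem_insert_iff, Set.mem_Ioi]
          constructor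
          · rintro ⟨hx, h0x⟩
            rcases eq_or_lt_of_le h0x with h | h
            · exact Or.inl h.symm
            · exact Or.inr ⟨hx, h⟩
          · rintro (rfl | ⟨hx, h0x⟩)
            · exact ⟨h0S, le_refl 0⟩
            · exact ⟨hx, le_of_lt h0x⟩
        rw [hins, Set.ncard_insert_of_notMem (by simp) ((hfin n).inter_of_left _)]
      have heq : (realRoots (Q (n + 2)) ∩ Set.Ioi 0).ncard
          = (realRoots (Q n) ∩ Set.Ioi 0).ncard + 1 := by omega
      rw [heq, hA]
      by_cases h2 : n % 2 = 0
      · rw [if_pos h2, if_pos (show (n + 2) % 2 = 0 by omega)]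
        omega
      · rw [if_neg h2, if_neg (show ¬ (n + 2) % 2 = 0 by omega)]
        omega
    · -- 0 is a root of Q (n+2) : count stays the same
      have h0C : (0:ℝ) ∈ realRoots (Q (n + 2)) := hroot0 (n + 2) (by omega)
      have hub : (realRoots (Q (n + 2)) ∩ Set.Ioi 0).ncard
          ≤ (realRoots (Q n) ∩ Set.Ioi 0).ncard :=
        count_le_aux _ _ (hfin _) (hfin n) (hinter2 n) 0 h0C
      have hlb : (realRoots (Q n) ∩ Set.Ioi 0).ncard
          ≤ (realRoots (Q (n + 2)) ∩ Set.Ioi 0).ncard := by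
        rcases Set.eq_empty_or_nonempty (realRoots (Q n) ∩ Set.Ioi 0) with h | h
        · rw [h]
          simp
        · obtain ⟨a, haS, ha0⟩ := h
          have := hlow n (by omega) ⟨a, haS, le_of_lt ha0⟩
          have h2 := hIoisub n
          omega
      have heq : (realRoots (Q (n + 2)) ∩ Set.Ioi 0).ncard
          = (realRoots (Q n) ∩ Set.Ioi 0).ncard := le_antisymm hub hlb
      rw [heq, hA]
      by_cases h2 : n % 2 = 0
      · rw [if_pos h2, if_pos (show (n + 2) % 2 = 0 by omega)]
        omega
      · rw [if_neg h2, if_neg (show ¬ (n + 2) % 2 = 0 by omega)]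
        omega
  -- two-step induction
  have main : ∀ n : ℕ,
      ((realRoots (Q n) ∩ Set.Ioi 0).ncard = (if n % 2 = 0 then n / 6 else (n + 3) / 6)) ∧
      ((realRoots (Q (n + 1)) ∩ Set.Ioi 0).ncard
        = (if (n + 1) % 2 = 0 then (n + 1) / 6 else (n + 1 + 3) / 6)) := by
    intro n
    induction n with
    | zero =>
      constructor
      · have h0 : realRoots (Q 0) = ∅ := by
          ext x
          simp [realRoots, hQ0]
        rw [h0]
        simp
      · have h1 : realRoots (Q 1) ∩ Set.Ioi 0 = ∅ := by
          apply Set.eq_empty_iff_forall_notMem.mpr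
          rintro x ⟨hx, hx0⟩
          simp [realRoots, hQ1] at hx
          rw [hx] at hx0
          simp at hx0
        rw [h1]
        simp
    | succ n ih =>
      exact ⟨ih.2, step n ih.1⟩
  exact fun n => (main n).1
end
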